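/- arXiv:1811.01694 — 8 statements merged into one kernel-verified Lean document; each statement's English description precedes it below -/
import Mathlib

section
/- Let J be a real 2n×2n matrix with JᵀΩ₀J = Ω₀, J² = −I, and such that Ω₀J is positive definite (i.e. J ∈ 𝒜𝒞⁺(2n)). Let S = (Ω₀J)^{1/2} be the positive definite symmetric square root of Ω₀J. Then S ∈ Sp(2n,ℝ) and S J S⁻¹ = −Ω₀. In particular, the conjugation action of Sp(2n,ℝ) on 𝒜𝒞⁺(2n) is transitive. -/
open Matrix
open scoped MatrixOrder

/-- The standard symplectic form matrix on `ℝ^{2n}`, in `n×n` blocks `[[0, 1],[-1, 0]]`. -/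
noncomputable def Omega0 (n : ℕ) : Matrix (Fin n ⊕ Fin n) (Fin n ⊕ Fin n) ℝ :=
  fromBlocks 0 1 (-1) 0

lemma Omega0_sq (n : ℕ) : Omega0 n * Omega0 n = -1 := by
  simp only [Omega0, Matrix.fromBlocks_multiply]
  rw [show (-1 : Matrix (Fin n ⊕ Fin n) (Fin n ⊕ Fin n) ℝ) = -(fromBlocks 1 0 0 1) by
    rw [Matrix.fromBlocks_one], Matrix.fromBlocks_neg]
  norm_num

set_option maxHeartbeats 2000000 in
/-- Let `J ∈ 𝒜𝒞⁺(2n)`, i.e. `J` is a symplectic matrix with `J² = -1` and `Ω₀ J` positive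
definite.  Then the positive definite symmetric square root `S = (Ω₀ J)^{1/2}` is symplectic
and conjugates `J` to the standard complex structure `-Ω₀`; in particular the conjugation
action of `Sp(2n, ℝ)` on `𝒜𝒞⁺(2n)` is transitive. -/
theorem stmt2 (n : ℕ) (J : Matrix (Fin n ⊕ Fin n) (Fin n ⊕ Fin n) ℝ)
    (hJ : Jᵀ * Omega0 n * J = Omega0 n) (hJ2 : J * J = -1)
    (hpd : (Omega0 n * J).PosDef) :
    (CFC.sqrt (Omega0 n * J))ᵀ * Omega0 n * CFC.sqrt (Omega0 n * J) = Omega0 n ∧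
    CFC.sqrt (Omega0 n * J) * J * (CFC.sqrt (Omega0 n * J))⁻¹ = -(Omega0 n) ∧
    ∃ P : Matrix (Fin n ⊕ Fin n) (Fin n ⊕ Fin n) ℝ,
      Pᵀ * Omega0 n * P = Omega0 n ∧ P * J * P⁻¹ = -(Omega0 n) := by
  set Ω := Omega0 n with hΩdef
  set A := Ω * J with hAdef
  set S := CFC.sqrt A with hSdef
  have hΩ2 : Ω * Ω = -1 := Omega0_sq n
  have hS2 : S * S = A := CFC.sqrt_mul_sqrt_self A hpd.posSemidef.nonneg
  have hSsymm : Sᵀ = S := by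
    have := (CFC.sqrt_nonneg A).posSemidef.isHermitian
    rwa [← Matrix.conjTranspose_eq_transpose_of_trivial]
  -- `J * Ω` is a two-sided inverse of `A`
  have hAr : A * (J * Ω) = 1 := by
    calc A * (J * Ω) = Ω * (J * J) * Ω := by rw [hAdef]; noncomm_ring
    _ = -(Ω * Ω) := by rw [hJ2]; noncomm_ring
    _ = 1 := by rw [hΩ2]; simp
  have hAl : (J * Ω) * A = 1 := by
    calc (J * Ω) * A = J * (Ω * Ω) * J := by rw [hAdef]; noncomm_ring
    _ = -(J * J) := by rw [hΩ2]; noncomm_ring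
    _ = 1 := by rw [hJ2]; simp
  -- `Jᵀ = A * Ω`
  have hJt : Jᵀ = A * Ω := by
    have h1 : Jᵀ * Ω = -(Ω * J) := by
      calc Jᵀ * Ω = -(Jᵀ * Ω * (J * J)) := by rw [hJ2]; noncomm_ring
      _ = -((Jᵀ * Ω * J) * J) := by noncomm_ring
      _ = -(Ω * J) := by rw [hJ]
    calc Jᵀ = -(Jᵀ * Ω * Ω) := by rw [Matrix.mul_assoc, hΩ2]; noncomm_ring
    _ = -(-(Ω * J) * Ω) := by rw [h1]
    _ = A * Ω := by rw [hAdef]; noncomm_ring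
  have hJJt : J * Jᵀ = (J * Ω) * (J * Ω) := by
    rw [hJt, hAdef]; noncomm_ring
  -- the candidate square root `T = Jᵀ * S³ * J`
  have hT : (Jᵀ * S ^ 3 * J).PosSemidef := by
    have := ((CFC.sqrt_nonneg A).posSemidef.pow 3).mul_mul_conjTranspose_same Jᵀ
    rwa [Matrix.conjTranspose_eq_transpose_of_trivial, Matrix.transpose_transpose] at this
  have hinner : S ^ 3 * ((J * Ω) * (J * Ω)) * S ^ 3 = A := by
    calc S ^ 3 * ((J * Ω) * (J * Ω)) * S ^ 3
        = S * ((S * S) * (J * Ω)) * ((J * Ω) * (S * S)) * S := by noncomm_ring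
      _ = S * (A * (J * Ω)) * ((J * Ω) * A) * S := by rw [hS2]
      _ = S * S := by rw [hAr, hAl]; noncomm_ring
      _ = A := hS2
  have hT2 : (Jᵀ * S ^ 3 * J) ^ 2 = A := by
    calc (Jᵀ * S ^ 3 * J) ^ 2 = Jᵀ * (S ^ 3 * (J * Jᵀ) * S ^ 3) * J := by noncomm_ring
    _ = Jᵀ * (S ^ 3 * ((J * Ω) * (J * Ω)) * S ^ 3) * J := by rw [hJJt]
    _ = Jᵀ * A * J := by rw [hinner]
    _ = A * ((Ω * Ω) * (J * J)) := by rw [hJt, hAdef]; noncomm_ring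
    _ = A := by rw [hΩ2, hJ2]; noncomm_ring
  have hTS : Jᵀ * S ^ 3 * J = S := (CFC.sqrt_unique (by rw [← sq]; exact hT2) hT.nonneg).symm
  -- the key identity `S * J = -(Ω * S)`
  have e1 : J * Ω * S = Ω * S ^ 3 * J := by
    calc J * Ω * S = J * Ω * (Jᵀ * S ^ 3 * J) := by rw [hTS]
    _ = ((J * Ω) * A) * (Ω * S ^ 3 * J) := by rw [hJt]; noncomm_ring
    _ = Ω * S ^ 3 * J := by rw [hAl]; noncomm_ring
  have hSJ : S * J = -(Ω * S) := by
    have e2 : J * (J * Ω * S) = S * J := by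
      calc J * (J * Ω * S) = J * (Ω * S ^ 3 * J) := by rw [e1]
      _ = ((J * Ω) * (S * S)) * (S * J) := by noncomm_ring
      _ = ((J * Ω) * A) * (S * J) := by rw [hS2]
      _ = S * J := by rw [hAl]; noncomm_ring
    have e3 : J * (J * Ω * S) = -(Ω * S) := by
      calc J * (J * Ω * S) = (J * J) * (Ω * S) := by noncomm_ring
      _ = -(Ω * S) := by rw [hJ2]; noncomm_ring
    exact e2.symm.trans e3
  have goal1 : Sᵀ * Ω * S = Ω := by
    rw [hSsymm]
    have hΩS : Ω * S = -(S * J) := by rw [hSJ, neg_neg]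
    calc S * Ω * S = S * (Ω * S) := by noncomm_ring
    _ = S * (-(S * J)) := by rw [hΩS]
    _ = -((S * S) * J) := by noncomm_ring
    _ = -(A * J) := by rw [hS2]
    _ = Ω := by rw [hAdef, Matrix.mul_assoc, hJ2]; simp
  have hSinv : S⁻¹ = S * (J * Ω) := by
    apply Matrix.inv_eq_right_inv
    calc S * (S * (J * Ω)) = (S * S) * (J * Ω) := by noncomm_ring
    _ = 1 := by rw [hS2, hAr]
  have goal2 : S * J * S⁻¹ = -Ω := by
    calc S * J * S⁻¹ = -(Ω * S) * (S * (J * Ω)) := by rw [hSJ, hSinv]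
    _ = -(Ω * ((S * S) * (J * Ω))) := by noncomm_ring
    _ = -(Ω * (A * (J * Ω))) := by rw [hS2]
    _ = -Ω := by rw [hAr]; simp
  exact ⟨goal1, goal2, S, goal1, goal2⟩
end

section
/- Let P ∈ Sp(2n,ℝ) be written in n×n blocks as P = [[A,B],[C,D]], and let Z be a symmetric n×n complex matrix whose imaginary part is positive definite. Then the complex matrix CZ + D is invertible, and the matrix P.Z := (AZ+B)(CZ+D)⁻¹ is again symmetric with positive definite imaginary part. Thus the Möbius transformations give a well-defined action of Sp(2n,ℝ) on Siegel's upper half space 𝔥(n). -/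
open Matrix

section Helpers

variable {n : ℕ}

private lemma swap_dot' (M : Matrix (Fin n) (Fin n) ℂ) (hM : Mᵀ = M) (v w : Fin n → ℂ) :
    v ⬝ᵥ M *ᵥ w = w ⬝ᵥ M *ᵥ v := by
  rw [Matrix.dotProduct_mulVec, ← Matrix.vecMul_transpose, hM, dotProduct_comm]

private lemma dot_ofReal' (Y : Matrix (Fin n) (Fin n) ℝ) (a b : Fin n → ℝ) :
    (fun i => ((a i : ℂ))) ⬝ᵥ (Y.map Complex.ofReal) *ᵥ (fun i => ((b i : ℂ)))
      = ((a ⬝ᵥ Y *ᵥ b : ℝ) : ℂ) := by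
  rw [show ((a ⬝ᵥ Y *ᵥ b : ℝ) : ℂ) = Complex.ofRealHom (a ⬝ᵥ Y *ᵥ b) from rfl,
    RingHom.map_dotProduct]
  congr 1
  funext i
  exact ((RingHom.map_mulVec Complex.ofRealHom Y b i).symm)

private lemma quadC' (Y : Matrix (Fin n) (Fin n) ℝ) (hY : Yᵀ = Y) (x : Fin n → ℂ) :
    star x ⬝ᵥ (Y.map Complex.ofReal) *ᵥ x =
      (((fun i => (x i).re) ⬝ᵥ Y *ᵥ (fun i => (x i).re)
        + (fun i => (x i).im) ⬝ᵥ Y *ᵥ (fun i => (x i).im) : ℝ) : ℂ) := by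
  set a : Fin n → ℝ := fun i => (x i).re
  set b : Fin n → ℝ := fun i => (x i).im
  have hx : x = (fun i => ((a i : ℂ))) + Complex.I • (fun i => ((b i : ℂ))) := by
    funext i; simp [a, b, Complex.ext_iff]
  have hsx : star x = (fun i => ((a i : ℂ))) - Complex.I • (fun i => ((b i : ℂ))) := by
    simp only [hx]; funext i
    simp [Complex.ext_iff]
  set Yc := Y.map Complex.ofReal with hYc
  have hYcs : Ycᵀ = Yc := by rw [hYc, ← Matrix.transpose_map, hY]
  rw [hsx]; conv_lhs => rw [hx]
  rw [Matrix.mulVec_add, Matrix.mulVec_smul, sub_dotProduct, dotProduct_add,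
    dotProduct_add, smul_dotProduct, smul_dotProduct,
    dotProduct_smul, dotProduct_smul]
  rw [swap_dot' Yc hYcs (fun i => ((b i : ℂ))) (fun i => ((a i : ℂ)))]
  rw [dot_ofReal', dot_ofReal', dot_ofReal']
  simp [smul_smul]
  have : Complex.I * Complex.I = -1 := Complex.I_mul_I
  linear_combination (-(b ⬝ᵥ Y *ᵥ b) : ℂ) * this

private lemma posC' (Y : Matrix (Fin n) (Fin n) ℝ) (hY : Y.PosDef) (x : Fin n → ℂ)
    (hx : x ≠ 0) :
    ∃ r : ℝ, 0 < r ∧ star x ⬝ᵥ (Y.map Complex.ofReal) *ᵥ x = (r : ℂ) := by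
  have hYs : Yᵀ = Y := hY.isHermitian
  refine ⟨_, ?_, quadC' Y hYs x⟩
  set a : Fin n → ℝ := fun i => (x i).re
  set b : Fin n → ℝ := fun i => (x i).im
  have hab : a ≠ 0 ∨ b ≠ 0 := by
    by_contra h
    push_neg at h
    apply hx
    funext i
    have ha := congrFun h.1 i
    have hb := congrFun h.2 i
    simp [a, b] at ha hb
    exact Complex.ext ha hb
  have h1 : ∀ v : Fin n → ℝ, 0 ≤ v ⬝ᵥ Y *ᵥ v := fun v => by
    simpa using hY.posSemidef.dotProduct_mulVec_nonneg v
  have h2 : ∀ v : Fin n → ℝ, v ≠ 0 → 0 < v ⬝ᵥ Y *ᵥ v := fun v hv => by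
    simpa using hY.dotProduct_mulVec_pos hv
  rcases hab with h | h
  · have := h2 a h; have := h1 b; linarith
  · have := h2 b h; have := h1 a; linarith

private lemma im_quad' (W : Matrix (Fin n) (Fin n) ℂ) (x : Fin n → ℝ) :
    ((star (fun i => ((x i : ℂ)))) ⬝ᵥ W *ᵥ (fun i => ((x i : ℂ)))).im
      = x ⬝ᵥ (W.map Complex.im) *ᵥ x := by
  have hs : star (fun i => ((x i : ℂ))) = fun i => ((x i : ℂ)) := by
    funext i; simp
  rw [hs]
  simp only [dotProduct, Matrix.mulVec, Matrix.map_apply, Complex.im_sum]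
  congr 1; funext i
  simp [Complex.mul_im, Complex.im_sum, Finset.mul_sum]

private lemma dot_conjT_mul' (K L : Matrix (Fin n) (Fin n) ℂ) (v w : Fin n → ℂ) :
    star v ⬝ᵥ (Kᴴ * L) *ᵥ w = star (K *ᵥ v) ⬝ᵥ (L *ᵥ w) := by
  rw [← Matrix.mulVec_mulVec, Matrix.dotProduct_mulVec, ← Matrix.star_mulVec]

end Helpers

/-- If `P = [[A,B],[C,D]]` is symplectic and `Z` is a symmetric complex `n×n` matrix with
positive definite imaginary part (a point of Siegel's upper half space), then `CZ + D` is
invertible and the Möbius image `(AZ+B)(CZ+D)⁻¹` is again symmetric with positive definite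
imaginary part.  Hence `Sp(2n,ℝ)` acts on Siegel's upper half space. -/
theorem stmt3 (n : ℕ) (A B C D : Matrix (Fin n) (Fin n) ℝ)
    (hP : (fromBlocks A B C D)ᵀ * Omega0 n * fromBlocks A B C D = Omega0 n)
    (Z : Matrix (Fin n) (Fin n) ℂ) (hZsymm : Z.IsSymm)
    (hZim : (Z.map Complex.im).PosDef) :
    IsUnit (C.map Complex.ofReal * Z + D.map Complex.ofReal) ∧
    ((A.map Complex.ofReal * Z + B.map Complex.ofReal) *
        (C.map Complex.ofReal * Z + D.map Complex.ofReal)⁻¹).IsSymm ∧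
    (((A.map Complex.ofReal * Z + B.map Complex.ofReal) *
        (C.map Complex.ofReal * Z + D.map Complex.ofReal)⁻¹).map Complex.im).PosDef := by
  -- extract the block relations over ℝ
  rw [Omega0, fromBlocks_transpose, fromBlocks_multiply, fromBlocks_multiply,
    fromBlocks_inj] at hP
  obtain ⟨h11, h12, h21, h22⟩ := hP
  have r1 : Aᵀ*C = Cᵀ*A := by linear_combination (norm := noncomm_ring) h11
  have r2 : Aᵀ*D - Cᵀ*B = 1 := by linear_combination (norm := noncomm_ring) h12
  have r3 : Bᵀ*C - Dᵀ*A = -1 := by linear_combination (norm := noncomm_ring) h21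
  have r4 : Bᵀ*D = Dᵀ*B := by linear_combination (norm := noncomm_ring) h22
  -- complexify
  set A' := A.map Complex.ofReal with hA'
  set B' := B.map Complex.ofReal with hB'
  set C' := C.map Complex.ofReal with hC'
  set D' := D.map Complex.ofReal with hD'
  have cplx : ∀ (X Y : Matrix (Fin n) (Fin n) ℝ),
      (X.map Complex.ofReal) = X.map (Complex.ofRealHom : ℝ →+* ℂ) := fun _ _ => rfl
  have c1 : A'ᵀ*C' = C'ᵀ*A' := by
    have := congrArg (fun M : Matrix (Fin n) (Fin n) ℝ =>
      M.map (Complex.ofRealHom : ℝ →+* ℂ)) r1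
    simp [hA', hB', hC', hD', Matrix.map_mul, Matrix.transpose_map] at this
    exact this
  have c2 : A'ᵀ*D' - C'ᵀ*B' = 1 := by
    have := congrArg (fun M : Matrix (Fin n) (Fin n) ℝ =>
      M.map (Complex.ofRealHom : ℝ →+* ℂ)) r2
    simp [hA', hB', hC', hD', Matrix.map_mul, Matrix.transpose_map, Matrix.map_sub,
      Matrix.map_one] at this
    exact this
  have hneg : ((-1 : Matrix (Fin n) (Fin n) ℝ)).map (Complex.ofRealHom : ℝ →+* ℂ)
      = (-1 : Matrix (Fin n) (Fin n) ℂ) := by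
    ext i j
    by_cases h : i = j <;> simp [Matrix.map_apply, Matrix.one_apply, h]
  have c3 : B'ᵀ*C' - D'ᵀ*A' = -1 := by
    have := congrArg (fun M : Matrix (Fin n) (Fin n) ℝ =>
      M.map (Complex.ofRealHom : ℝ →+* ℂ)) r3
    simp [hA', hB', hC', hD', Matrix.map_mul, Matrix.transpose_map, Matrix.map_sub,
      Matrix.map_one, hneg] at this
    exact this
  have c4 : B'ᵀ*D' = D'ᵀ*B' := by
    have := congrArg (fun M : Matrix (Fin n) (Fin n) ℝ =>
      M.map (Complex.ofRealHom : ℝ →+* ℂ)) r4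
    simp [hA', hB', hC', hD', Matrix.map_mul, Matrix.transpose_map] at this
    exact this
  set M := C' * Z + D' with hM
  set N := A' * Z + B' with hN
  have hZt : Zᵀ = Z := hZsymm
  -- conjTransposes of real matrices
  have hreal : ∀ X : Matrix (Fin n) (Fin n) ℝ, (X.map Complex.ofReal)ᴴ = Xᵀ.map Complex.ofReal := by
    intro X; ext i j; simp [Matrix.conjTranspose_apply]
  -- key algebraic identities
  have key1 : Nᵀ * M = Mᵀ * N := by
    rw [hM, hN, transpose_add, transpose_add, transpose_mul, transpose_mul, hZt]
    linear_combination (norm := noncomm_ring) Z * c1 * Z + Z * c2 + c3 * Z + c4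
  have hMH : Mᴴ = Zᴴ * C'ᵀ + D'ᵀ := by
    rw [hM, conjTranspose_add, conjTranspose_mul, hreal C, hreal D,
      ← Matrix.transpose_map, ← Matrix.transpose_map]
  have hNH : Nᴴ = Zᴴ * A'ᵀ + B'ᵀ := by
    rw [hN, conjTranspose_add, conjTranspose_mul, hreal A, hreal B,
      ← Matrix.transpose_map, ← Matrix.transpose_map]
  have key2 : Mᴴ * N - Nᴴ * M = Z - Zᴴ := by
    rw [hMH, hNH, hM, hN]
    linear_combination (norm := noncomm_ring) - Zᴴ * c1 * Z - Zᴴ * c2 - c3 * Z - c4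
  -- Z - Zᴴ in terms of the imaginary part
  have hZsub : Z - Zᴴ = ((2*Complex.I) : ℂ) • ((Z.map Complex.im).map Complex.ofReal) := by
    ext i j
    have hji : Z j i = Z i j := congrFun (congrFun hZt i) j
    simp only [Matrix.sub_apply, Matrix.conjTranspose_apply, Matrix.smul_apply,
      Matrix.map_apply, hji, smul_eq_mul]
    apply Complex.ext <;> simp <;> ring
  -- invertibility of M
  have hdet : M.det ≠ 0 := by
    intro h0
    obtain ⟨v, hv, hMv⟩ := (Matrix.exists_mulVec_eq_zero_iff).2 h0
    obtain ⟨r, hr, hrv⟩ := posC' (Z.map Complex.im) hZim v hv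
    have e1 : star v ⬝ᵥ (Mᴴ * N) *ᵥ v = 0 := by
      rw [dot_conjT_mul', hMv]; simp
    have e2 : star v ⬝ᵥ (Nᴴ * M) *ᵥ v = 0 := by
      rw [dot_conjT_mul', hMv]; simp
    have e3 : star v ⬝ᵥ (Z - Zᴴ) *ᵥ v = 0 := by
      rw [← key2, Matrix.sub_mulVec, dotProduct_sub, e1, e2, sub_zero]
    rw [hZsub, Matrix.smul_mulVec, dotProduct_smul, hrv] at e3
    have h4 := congrArg Complex.im e3
    simp [smul_eq_mul] at h4
    exact hr.ne' h4
  have hMunit : IsUnit M := by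
    rw [Matrix.isUnit_iff_isUnit_det]
    exact isUnit_iff_ne_zero.2 hdet
  have hMinv : M * M⁻¹ = 1 := Matrix.mul_nonsing_inv M (isUnit_iff_ne_zero.2 hdet)
  have hinvM : M⁻¹ * M = 1 := Matrix.nonsing_inv_mul M (isUnit_iff_ne_zero.2 hdet)
  set W := N * M⁻¹ with hW
  have hWsymm : Wᵀ = W := by
    rw [hW, transpose_mul, Matrix.transpose_nonsing_inv]
    have hMt : Mᵀ⁻¹ * Mᵀ = 1 := by
      rw [← Matrix.transpose_nonsing_inv, ← transpose_mul, hMinv, transpose_one]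
    calc Mᵀ⁻¹ * Nᵀ = Mᵀ⁻¹ * (Nᵀ * M) * M⁻¹ := by
          conv_rhs => rw [Matrix.mul_assoc, Matrix.mul_assoc, hMinv, Matrix.mul_one]
      _ = Mᵀ⁻¹ * (Mᵀ * N) * M⁻¹ := by rw [key1]
      _ = N * M⁻¹ := by rw [← Matrix.mul_assoc, hMt, Matrix.one_mul]
  refine ⟨hMunit, hWsymm, ?_⟩
  constructor
  · -- hermitian over ℝ = symmetric
    show ((W.map Complex.im))ᴴ = W.map Complex.im
    ext i j
    have hji : W j i = W i j := congrFun (congrFun hWsymm i) j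
    simp [Matrix.conjTranspose_apply, hji]
  · intro x hx
    set xc : Fin n → ℂ := fun i => ((x i : ℂ)) with hxc
    have hxcne : xc ≠ 0 := by
      intro h
      apply hx
      ext i
      have := congrFun h i
      simpa [hxc] using this
    set u : Fin n → ℂ := M⁻¹ *ᵥ xc with hu
    have hMu : M *ᵥ u = xc := by
      rw [hu, Matrix.mulVec_mulVec, hMinv, Matrix.one_mulVec]
    have hune : u ≠ 0 := by
      intro h
      apply hxcne
      rw [← hMu, h, Matrix.mulVec_zero]
    obtain ⟨r, hr, hrv⟩ := posC' (Z.map Complex.im) hZim u hune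
    -- the complex quadratic form
    set z : ℂ := star xc ⬝ᵥ W *ᵥ xc with hz
    have hz1 : z = star u ⬝ᵥ (Mᴴ * N) *ᵥ u := by
      rw [dot_conjT_mul', hMu, hz]
      congr 1
      rw [hW, ← hMu, Matrix.mulVec_mulVec, Matrix.mul_assoc, hinvM, Matrix.mul_one]
    have hz2 : (starRingEnd ℂ) z = star u ⬝ᵥ (Nᴴ * M) *ᵥ u := by
      rw [hz1]
      rw [show ((starRingEnd ℂ) (star u ⬝ᵥ (Mᴴ * N) *ᵥ u))
        = star (star u ⬝ᵥ (Mᴴ * N) *ᵥ u) from rfl]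
      rw [← Matrix.star_dotProduct, Matrix.star_mulVec, ← Matrix.dotProduct_mulVec,
        conjTranspose_mul, conjTranspose_conjTranspose]
    have hzsub : z - (starRingEnd ℂ) z = (2*Complex.I) * r := by
      rw [hz2, hz1, ← dotProduct_sub, ← Matrix.sub_mulVec, key2, hZsub,
        Matrix.smul_mulVec, dotProduct_smul, hrv]
      simp [smul_eq_mul]
    have him : z.im = r := by
      have h2 := Complex.sub_conj z
      rw [hzsub] at h2
      have h3 := congrArg Complex.im h2
      simp [Complex.mul_im] at h3
      linarith
    suffices hs : 0 < star ⇑x ⬝ᵥ (W.map Complex.im) *ᵥ ⇑x by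
      simpa [dotProduct, mulVec, Finsupp.sum_fintype, Finset.mul_sum, mul_assoc] using hs
    have : star (⇑x) = ⇑x := by funext i; simp
    rw [this, ← im_quad' W x]
    rw [show ((star (fun i => ((x i : ℂ)))) ⬝ᵥ W *ᵥ (fun i => ((x i : ℂ)))) = z from rfl]
    rw [him]
    exact hr
end

section
/- The Möbius action of Sp(2n,ℝ) on Siegel's upper half space 𝔥(n) is transitive: for every symmetric n×n complex matrix Z with positive definite imaginary part there exists P = [[A,B],[C,D]] ∈ Sp(2n,ℝ) such that C(i·I_n)+D is invertible and (A(i·I_n)+B)(C(i·I_n)+D)⁻¹ = Z. -/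
open Matrix
open scoped MatrixOrder

/-- The Möbius action of `Sp(2n,ℝ)` on Siegel's upper half space is transitive: every
symmetric complex matrix `Z` with positive definite imaginary part is the image of the
base point `i·1` under some symplectic matrix `[[A,B],[C,D]]`. -/
theorem stmt4 (n : ℕ) (Z : Matrix (Fin n) (Fin n) ℂ) (hZsymm : Z.IsSymm)
    (hZim : (Z.map Complex.im).PosDef) :
    ∃ A B C D : Matrix (Fin n) (Fin n) ℝ,
      (fromBlocks A B C D)ᵀ * Omega0 n * fromBlocks A B C D = Omega0 n ∧
      IsUnit (C.map Complex.ofReal * (Complex.I • (1 : Matrix (Fin n) (Fin n) ℂ)) +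
        D.map Complex.ofReal) ∧
      (A.map Complex.ofReal * (Complex.I • (1 : Matrix (Fin n) (Fin n) ℂ)) +
          B.map Complex.ofReal) *
        (C.map Complex.ofReal * (Complex.I • (1 : Matrix (Fin n) (Fin n) ℂ)) +
          D.map Complex.ofReal)⁻¹ = Z := by
  classical
  set Y : Matrix (Fin n) (Fin n) ℝ := Z.map Complex.im with hY
  set X : Matrix (Fin n) (Fin n) ℝ := Z.map Complex.re with hX
  have hmap : ∀ M N : Matrix (Fin n) (Fin n) ℝ,
      (M * N).map Complex.ofReal = M.map Complex.ofReal * N.map Complex.ofReal := by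
    intro M N
    ext i j
    simp [Matrix.mul_apply]
  have hXsymm : Xᵀ = X := by
    ext i j
    have := congrFun (congrFun hZsymm i) j
    simp only [transpose_apply] at this ⊢
    simp [hX, ← this]
  set S : Matrix (Fin n) (Fin n) ℝ := CFC.sqrt Y with hSdef
  have hSS : S * S = Y := CFC.sqrt_mul_sqrt_self Y hZim.posSemidef.nonneg
  have hSsymm : Sᵀ = S := by
    have := (CFC.sqrt_nonneg Y).posSemidef.isHermitian
    rwa [IsHermitian, conjTranspose_eq_transpose_of_trivial] at this
  have hSunit : IsUnit S.det := by
    have h : S.det * S.det = Y.det := by rw [← det_mul, hSS]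
    have hYdet : IsUnit Y.det := hZim.det_pos.ne'.isUnit
    rw [← h] at hYdet
    exact isUnit_of_mul_isUnit_left hYdet
  set W : Matrix (Fin n) (Fin n) ℝ := S⁻¹ with hWdef
  have hWS : W * S = 1 := nonsing_inv_mul S hSunit
  have hSW : S * W = 1 := mul_nonsing_inv S hSunit
  have hWsymm : Wᵀ = W := by rw [hWdef, transpose_nonsing_inv, hSsymm]
  have hWSc : W.map Complex.ofReal * S.map Complex.ofReal = 1 := by
    rw [← hmap, hWS]; ext i j; by_cases h : i = j <;> simp [Matrix.one_apply, h]
  have hSWc : S.map Complex.ofReal * W.map Complex.ofReal = 1 := by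
    rw [← hmap, hSW]; ext i j; by_cases h : i = j <;> simp [Matrix.one_apply, h]
  have h0 : (0 : Matrix (Fin n) (Fin n) ℝ).map Complex.ofReal = 0 := by
    ext i j; simp
  refine ⟨S, X * W, 0, W, ?_, ?_, ?_⟩
  · rw [Omega0, fromBlocks_transpose, fromBlocks_multiply, fromBlocks_multiply]
    simp [hSsymm, hWsymm, hXsymm, hSW, hWS, mul_assoc]
  · simp only [h0, zero_mul, zero_add]
    exact ⟨⟨W.map Complex.ofReal, S.map Complex.ofReal, hWSc, hSWc⟩, rfl⟩
  · simp only [h0, zero_mul, zero_add]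
    have hinv : (W.map Complex.ofReal)⁻¹ = S.map Complex.ofReal :=
      inv_eq_right_inv hWSc
    rw [hinv, add_mul, mul_smul_comm, mul_one, smul_mul_assoc, ← hmap, hSS, hmap,
      mul_assoc, hWSc, mul_one]
    ext i j
    simp [hX, hY, Complex.ext_iff]
end

section
/- Let (V, ⟨·,·⟩) be a finite-dimensional real inner product space, let I : V → V be a linear map with I∘I = −id and ⟨Iv, Iw⟩ = ⟨v,w⟩ for all v,w, and let ω_c : V × V → ℂ be an ℝ-bilinear alternating form of type (2,0) with respect to I, i.e. ω_c(Iv, w) = i·ω_c(v,w) and ω_c(v, Iw) = i·ω_c(v,w) for all v,w. Let J : V → V be the linear map determined by ⟨Jv, w⟩ = Re(ω_c(v,w)) for all v,w, and assume J∘J = −id. Then: (1) ⟨Jv, Jw⟩ = ⟨v,w⟩ for all v,w; (2) I∘J + J∘I = 0; (3) ⟨(I∘J)v, w⟩ = Im(ω_c(v,w)) for all v,w; (4) ⟨Iv, Jv⟩ = 0 for all v. -/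
open scoped RealInnerProductSpace

/-- Algebraic criterion for hyperkähler structures: if `I` is an isometric complex structure
on a real inner product space `V`, `ω_c` is an alternating ℝ-bilinear ℂ-valued form of type
`(2,0)` with respect to `I`, and the endomorphism `J` defined by `⟨Jv, w⟩ = Re ω_c(v,w)`
satisfies `J² = -id`, then `J` is isometric, anticommutes with `I`, the form
`⟨(IJ)v, w⟩` equals `Im ω_c(v,w)`, and `Iv ⊥ Jv` for all `v`. -/
theorem stmt8 {V : Type*} [NormedAddCommGroup V] [InnerProductSpace ℝ V]
    [FiniteDimensional ℝ V]
    (I J : V →ₗ[ℝ] V) (ωc : V →ₗ[ℝ] V →ₗ[ℝ] ℂ)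
    (hI2 : ∀ v, I (I v) = -v)
    (hIiso : ∀ v w, ⟪I v, I w⟫ = ⟪v, w⟫)
    (halt : ∀ v w, ωc v w = -ωc w v)
    (h20l : ∀ v w, ωc (I v) w = Complex.I * ωc v w)
    (h20r : ∀ v w, ωc v (I w) = Complex.I * ωc v w)
    (hJdef : ∀ v w, ⟪J v, w⟫ = (ωc v w).re)
    (hJ2 : ∀ v, J (J v) = -v) :
    (∀ v w, ⟪J v, J w⟫ = ⟪v, w⟫) ∧
    (∀ v, I (J v) + J (I v) = 0) ∧
    (∀ v w, ⟪I (J v), w⟫ = (ωc v w).im) ∧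
    (∀ v, ⟪I v, J v⟫ = 0) := by
  -- skew-adjointness of J
  have hskew : ∀ v w : V, ⟪J v, w⟫ = -⟪J w, v⟫ := by
    intro v w
    rw [hJdef, hJdef, halt]
    simp
  -- I is skew-adjoint
  have hIskew : ∀ v w : V, ⟪I v, w⟫ = -⟪v, I w⟫ := by
    intro v w
    have := hIiso v (I w)
    rw [hI2] at this
    simp only [inner_neg_right] at this
    linarith [this]
  -- (3)
  have h3 : ∀ v w : V, ⟪I (J v), w⟫ = (ωc v w).im := by
    intro v w
    have h1 : ⟪J (I v), w⟫ = -(ωc v w).im := by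
      rw [hJdef, h20l]
      simp
    have h2 : ⟪I (J v), w⟫ = -⟪J v, I w⟫ := hIskew (J v) w
    rw [hJdef, h20r] at h2
    simp at h2
    linarith [h2]
  -- (2)
  have h2 : ∀ v : V, I (J v) + J (I v) = 0 := by
    intro v
    have : ∀ w : V, ⟪I (J v) + J (I v), w⟫ = ⟪(0 : V), w⟫ := by
      intro w
      rw [inner_add_left, h3, hJdef, h20l]
      simp
    exact ext_inner_right ℝ this
  refine ⟨?_, h2, h3, ?_⟩
  · intro v w
    rw [hskew v (J w), hJ2]
    simp [real_inner_comm]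
  · intro v
    have h0 : ωc v v = 0 := by
      have := halt v v
      have h2 : (2 : ℂ) * ωc v v = 0 := by ring_nf; linear_combination this
      simpa using h2
    have : ⟪I v, J v⟫ = -⟪v, I (J v)⟫ := hIskew v (J v)
    rw [this, real_inner_comm, h3, h0]
    simp
end

section
/- Let J and A be real 2n×2n matrices such that J² = −I, det(J) = 1, and AJ + JA = 0. Then the adjugate matrix adj(A) also anticommutes with J: adj(A)·J + J·adj(A) = 0. -/
open Matrix

/-- If `J² = -1`, `det J = 1` and `A` anticommutes with `J`, then the adjugate of `A`
also anticommutes with `J`. -/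
theorem stmt9 (n : ℕ) (J A : Matrix (Fin (2 * n)) (Fin (2 * n)) ℝ)
    (hJ2 : J * J = -1) (hdet : J.det = 1) (hA : A * J + J * A = 0) :
    A.adjugate * J + J * A.adjugate = 0 := by
  rcases Nat.eq_zero_or_pos n with hn | hn
  · subst hn
    ext i
    exact i.elim0
  -- J⁻¹ = -J and adjugate J = -J
  have hJinv : (-J) * J = 1 := by rw [neg_mul, hJ2, neg_neg]
  have hadjJ : adjugate J = -J := by
    have h1 : J * adjugate J = 1 := by rw [mul_adjugate, hdet, one_smul]
    calc adjugate J = ((-J) * J) * adjugate J := by rw [hJinv, one_mul]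
      _ = (-J) * (J * adjugate J) := by rw [mul_assoc]
      _ = -J := by rw [h1, mul_one]
  have h1 : A * J = -(J * A) := eq_neg_of_add_eq_zero_left hA
  have h2 : adjugate (A * J) = adjugate J * adjugate A := adjugate_mul_distrib A J
  have h3 : adjugate (-(J * A)) = -(adjugate A * adjugate J) := by
    have : -(J * A) = (-1 : ℝ) • (J * A) := by simp
    rw [this, adjugate_smul, adjugate_mul_distrib]
    have hcard : Fintype.card (Fin (2 * n)) - 1 = 2 * n - 1 := by simp
    rw [hcard]
    have hodd : Odd (2 * n - 1) := by
      rcases n with _ | m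
      · omega
      · exact ⟨m, by omega⟩
    rw [hodd.neg_one_pow, neg_one_smul]
  have key : adjugate J * adjugate A = -(adjugate A * adjugate J) := by
    rw [← h2, h1, h3]
  rw [hadjJ] at key
  have : -J * adjugate A = -(adjugate A * -J) := key
  have h4 : J * adjugate A = -(adjugate A * J) := by
    have := congrArg Neg.neg this
    simpa [neg_mul, mul_neg] using this
  rw [h4]
  exact add_neg_cancel _
end

section
/- Let G be a symmetric positive definite real n×n matrix and let A be a real n×n matrix such that G·A is symmetric. Then G·adj(A) is also symmetric, where adj(A) is the adjugate of A. -/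
open Matrix

/-- If `G` is a symmetric positive definite real matrix and `G * A` is symmetric, then
`G * adjugate A` is also symmetric. -/
theorem stmt10 (n : ℕ) (G A : Matrix (Fin n) (Fin n) ℝ)
    (hG : G.PosDef) (hGA : (G * A).IsSymm) :
    (G * A.adjugate).IsSymm := by
  have hGsym : Gᵀ = G := hG.1
  have hdet : IsUnit G.det := isUnit_iff_ne_zero.mpr (ne_of_gt hG.det_pos)
  have hGinv : G * G⁻¹ = 1 := mul_nonsing_inv G hdet
  have hinvG : G⁻¹ * G = 1 := nonsing_inv_mul G hdet
  -- Aᵀ = G * A * G⁻¹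
  have hAt : Aᵀ = G * A * G⁻¹ := by
    have h1 : Aᵀ * G = G * A := by
      have := hGA
      rw [Matrix.IsSymm, transpose_mul, hGsym] at this
      exact this
    calc Aᵀ = Aᵀ * (G * G⁻¹) := by rw [hGinv, mul_one]
    _ = (Aᵀ * G) * G⁻¹ := by rw [mul_assoc]
    _ = G * A * G⁻¹ := by rw [h1]
  have hadjG : G.adjugate = G.det • G⁻¹ := by
    calc G.adjugate = (G⁻¹ * G) * G.adjugate := by rw [hinvG, one_mul]
    _ = G⁻¹ * (G * G.adjugate) := by rw [mul_assoc]
    _ = G⁻¹ * (G.det • 1) := by rw [mul_adjugate]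
    _ = G.det • G⁻¹ := by rw [Matrix.mul_smul, mul_one]
  have hadjGinv : (G⁻¹).adjugate = (G.det)⁻¹ • G := by
    calc (G⁻¹).adjugate = (G * G⁻¹) * (G⁻¹).adjugate := by rw [hGinv, one_mul]
    _ = G * (G⁻¹ * (G⁻¹).adjugate) := by rw [mul_assoc]
    _ = G * ((G⁻¹).det • 1) := by rw [mul_adjugate]
    _ = (G.det)⁻¹ • G := by
        rw [det_nonsing_inv, Ring.inverse_eq_inv, Matrix.mul_smul, mul_one]
  -- adjugate Aᵀ = G * adjugate A * G⁻¹
  have key : (A.adjugate)ᵀ = G * A.adjugate * G⁻¹ := by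
    rw [adjugate_transpose, hAt, adjugate_mul_distrib, adjugate_mul_distrib,
      hadjGinv, hadjG]
    rw [Matrix.smul_mul, Matrix.mul_smul, Matrix.mul_smul, smul_smul,
      inv_mul_cancel₀ (ne_of_gt hG.det_pos), one_smul, mul_assoc]
  rw [Matrix.IsSymm, transpose_mul, hGsym, key]
  rw [mul_assoc, mul_assoc, hinvG, mul_one]
end

section
/- Let k₁, k₂, k₃, k₄ be real numbers and let M be the real 6×6 matrix M = −(1/2)·[[2k₁, 2k₂, 0, 0, −2k₄, 0], [k₂, k₁+k₃, k₂, k₄, 0, −k₄], [0, 2k₂, 2k₃, 0, 2k₄, 0], [0, 2k₄, 0, 2k₁, 2k₂, 0], [−k₄, 0, k₄, k₂, k₁+k₃, k₂], [0, −2k₄, 0, 0, 2k₂, 2k₃]]. Set δ± = (1/2)·((k₁+k₃) ± √((k₁−k₃)² + 4k₂² + 4k₄²)). Then the characteristic polynomial of M equals (X + (k₁+k₃)/2)² · (X + δ⁺)² · (X + δ⁻)²; in particular the eigenvalues of M are −(k₁+k₃)/2, −δ⁺ and −δ⁻, each with multiplicity 2. -/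
open Matrix Polynomial

set_option maxHeartbeats 1000000 in
private lemma aux_detUW (k₁ k₂ k₃ k₄ x : ℝ) :
    (!![(x:ℂ)+k₁, k₂ - Complex.I*k₄, 0;
        k₂/2 + Complex.I*(k₄/2), (x:ℂ)+(k₁+k₃)/2, k₂/2 - Complex.I*(k₄/2);
        0, k₂ + Complex.I*k₄, (x:ℂ)+k₃]).det *
    (!![(x:ℂ)+k₁, k₂ + Complex.I*k₄, 0;
        k₂/2 - Complex.I*(k₄/2), (x:ℂ)+(k₁+k₃)/2, k₂/2 + Complex.I*(k₄/2);
        0, k₂ - Complex.I*k₄, (x:ℂ)+k₃]).det =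
    ((x:ℂ) + ((k₁:ℂ)+k₃)/2)^2 * ((x:ℂ)^2 + ((k₁:ℂ)+k₃)*x + ((k₁:ℂ)*k₃ - k₂^2 - k₄^2))^2 := by
  simp only [Matrix.det_fin_three, Matrix.of_apply, Matrix.cons_val', Matrix.cons_val_zero,
    Matrix.cons_val_one, Matrix.head_cons, Matrix.cons_val_two, Matrix.tail_cons,
    Matrix.head_fin_const, Matrix.empty_val', Matrix.cons_val_fin_one]
  linear_combination ((-1/4)*(k₃:ℂ)*(k₃:ℂ)*(k₄:ℂ)*(k₄:ℂ)*(k₄:ℂ)*(k₄:ℂ) + (1/4)*(k₃:ℂ)*(k₃:ℂ)*(k₄:ℂ)*(k₄:ℂ)*(k₄:ℂ)*(k₄:ℂ)*Complex.I*Complex.I + (-1/2)*(k₂:ℂ)*(k₂:ℂ)*(k₃:ℂ)*(k₃:ℂ)*(k₄:ℂ)*(k₄:ℂ) + (-1/2)*(k₁:ℂ)*(k₃:ℂ)*(k₄:ℂ)*(k₄:ℂ)*(k₄:ℂ)*(k₄:ℂ) + (1/2)*(k₁:ℂ)*(k₃:ℂ)*(k₄:ℂ)*(k₄:ℂ)*(k₄:ℂ)*(k₄:ℂ)*Complex.I*Complex.I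 + (1/2)*(k₁:ℂ)*(k₃:ℂ)*(k₃:ℂ)*(k₃:ℂ)*(k₄:ℂ)*(k₄:ℂ) + (-1)*(k₁:ℂ)*(k₂:ℂ)*(k₂:ℂ)*(k₃:ℂ)*(k₄:ℂ)*(k₄:ℂ) + (-1/4)*(k₁:ℂ)*(k₁:ℂ)*(k₄:ℂ)*(k₄:ℂ)*(k₄:ℂ)*(k₄:ℂ) + (1/4)*(k₁:ℂ)*(k₁:ℂ)*(k₄:ℂ)*(k₄:ℂ)*(k₄:ℂ)*(k₄:ℂ)*Complex.I*Complex.I + (1)*(k₁:ℂ)*(k₁:ℂ)*(k₃:ℂ)*(k₃:ℂ)*(k₄:ℂ)*(k₄:ℂ) + (-1/2)*(k₁:ℂ)*(k₁:ℂ)*(k₂:ℂ)*(k₂:ℂ)*(k₄:ℂ)*(k₄:ℂ) + (1/2)*(k₁:ℂ)*(k₁:ℂ)*(k₁:ℂ)*(k₃:ℂ)*(k₄:ℂ)*(k₄:ℂ) + (-1)*(x:ℂ)*(k₃:ℂ)*(k₄:ℂ)*(k₄:ℂ)*(k₄:ℂ)*(k₄:ℂ) + (1)*(x:ℂ)*(k₃:ℂ)*(k₄:ℂ)*(k₄:ℂ)*(k₄:ℂ)*(k₄:ℂ)*Complex.I*Complex.I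 + (1/2)*(x:ℂ)*(k₃:ℂ)*(k₃:ℂ)*(k₃:ℂ)*(k₄:ℂ)*(k₄:ℂ) + (-2)*(x:ℂ)*(k₂:ℂ)*(k₂:ℂ)*(k₃:ℂ)*(k₄:ℂ)*(k₄:ℂ) + (-1)*(x:ℂ)*(k₁:ℂ)*(k₄:ℂ)*(k₄:ℂ)*(k₄:ℂ)*(k₄:ℂ) + (1)*(x:ℂ)*(k₁:ℂ)*(k₄:ℂ)*(k₄:ℂ)*(k₄:ℂ)*(k₄:ℂ)*Complex.I*Complex.I + (7/2)*(x:ℂ)*(k₁:ℂ)*(k₃:ℂ)*(k₃:ℂ)*(k₄:ℂ)*(k₄:ℂ) + (-2)*(x:ℂ)*(k₁:ℂ)*(k₂:ℂ)*(k₂:ℂ)*(k₄:ℂ)*(k₄:ℂ) + (7/2)*(x:ℂ)*(k₁:ℂ)*(k₁:ℂ)*(k₃:ℂ)*(k₄:ℂ)*(k₄:ℂ) + (1/2)*(x:ℂ)*(k₁:ℂ)*(k₁:ℂ)*(k₁:ℂ)*(k₄:ℂ)*(k₄:ℂ) + (-1)*(x:ℂ)*(x:ℂ)*(k₄:ℂ)*(k₄:ℂ)*(k₄:ℂ)*(k₄:ℂ)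 + (1)*(x:ℂ)*(x:ℂ)*(k₄:ℂ)*(k₄:ℂ)*(k₄:ℂ)*(k₄:ℂ)*Complex.I*Complex.I + (5/2)*(x:ℂ)*(x:ℂ)*(k₃:ℂ)*(k₃:ℂ)*(k₄:ℂ)*(k₄:ℂ) + (-2)*(x:ℂ)*(x:ℂ)*(k₂:ℂ)*(k₂:ℂ)*(k₄:ℂ)*(k₄:ℂ) + (7)*(x:ℂ)*(x:ℂ)*(k₁:ℂ)*(k₃:ℂ)*(k₄:ℂ)*(k₄:ℂ) + (5/2)*(x:ℂ)*(x:ℂ)*(k₁:ℂ)*(k₁:ℂ)*(k₄:ℂ)*(k₄:ℂ) + (4)*(x:ℂ)*(x:ℂ)*(x:ℂ)*(k₃:ℂ)*(k₄:ℂ)*(k₄:ℂ) + (4)*(x:ℂ)*(x:ℂ)*(x:ℂ)*(k₁:ℂ)*(k₄:ℂ)*(k₄:ℂ) + (2)*(x:ℂ)*(x:ℂ)*(x:ℂ)*(x:ℂ)*(k₄:ℂ)*(k₄:ℂ)) * Complex.I_sq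

set_option maxHeartbeats 2000000 in
set_option maxRecDepth 8000 in
/-- The characteristic polynomial of the curvature matrix `M` built from the invariants
`k₁, k₂, k₃, k₄` factors as `(X + (k₁+k₃)/2)² (X + δ⁺)² (X + δ⁻)²`, where
`δ± = (1/2)((k₁+k₃) ± √((k₁-k₃)² + 4k₂² + 4k₄²))`; in particular the eigenvalues of `M`
are `-(k₁+k₃)/2`, `-δ⁺` and `-δ⁻`, each with multiplicity `2`. -/
theorem stmt13 (k₁ k₂ k₃ k₄ : ℝ) (M : Matrix (Fin 6) (Fin 6) ℝ)
    (hM : M = (-(1 / 2 : ℝ)) •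
      !![2*k₁, 2*k₂, 0, 0, -2*k₄, 0;
         k₂, k₁+k₃, k₂, k₄, 0, -k₄;
         0, 2*k₂, 2*k₃, 0, 2*k₄, 0;
         0, 2*k₄, 0, 2*k₁, 2*k₂, 0;
         -k₄, 0, k₄, k₂, k₁+k₃, k₂;
         0, -2*k₄, 0, 0, 2*k₂, 2*k₃])
    (δp δm : ℝ)
    (hδp : δp = (1 / 2) * ((k₁ + k₃) + Real.sqrt ((k₁ - k₃) ^ 2 + 4 * k₂ ^ 2 + 4 * k₄ ^ 2)))
    (hδm : δm = (1 / 2) * ((k₁ + k₃) - Real.sqrt ((k₁ - k₃) ^ 2 + 4 * k₂ ^ 2 + 4 * k₄ ^ 2))) :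
    M.charpoly = (X + C ((k₁ + k₃) / 2)) ^ 2 * (X + C δp) ^ 2 * (X + C δm) ^ 2 := by
  have hnn : (0:ℝ) ≤ (k₁ - k₃) ^ 2 + 4 * k₂ ^ 2 + 4 * k₄ ^ 2 := by positivity
  have hs2 : Real.sqrt ((k₁ - k₃) ^ 2 + 4 * k₂ ^ 2 + 4 * k₄ ^ 2) *
      Real.sqrt ((k₁ - k₃) ^ 2 + 4 * k₂ ^ 2 + 4 * k₄ ^ 2)
      = (k₁ - k₃) ^ 2 + 4 * k₂ ^ 2 + 4 * k₄ ^ 2 := Real.mul_self_sqrt hnn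
  have hsum : δp + δm = k₁ + k₃ := by rw [hδp, hδm]; ring
  have hprod : δp * δm = k₁ * k₃ - k₂ ^ 2 - k₄ ^ 2 := by
    rw [hδp, hδm]; nlinarith [hs2]
  have hfac : (X + C δp) * (X + C δm)
      = X ^ 2 + C (k₁ + k₃) * X + C (k₁ * k₃ - k₂ ^ 2 - k₄ ^ 2) := by
    rw [← hsum, ← hprod]
    simp only [C_add, C_mul]
    ring
  have hRHS : (X + C ((k₁ + k₃) / 2)) ^ 2 * (X + C δp) ^ 2 * (X + C δm) ^ 2
      = (X + C ((k₁ + k₃) / 2)) ^ 2 *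
        (X ^ 2 + C (k₁ + k₃) * X + C (k₁ * k₃ - k₂ ^ 2 - k₄ ^ 2)) ^ 2 := by
    rw [← hfac]; ring
  rw [hRHS]
  apply Polynomial.funext
  intro x
  have hev : eval x M.charpoly
      = (!![x+k₁, k₂, 0, 0, -k₄, 0;
            k₂/2, x+(k₁+k₃)/2, k₂/2, k₄/2, 0, -(k₄/2);
            0, k₂, x+k₃, 0, k₄, 0;
            0, k₄, 0, x+k₁, k₂, 0;
            -(k₄/2), 0, k₄/2, k₂/2, x+(k₁+k₃)/2, k₂/2;
            0, -k₄, 0, 0, k₂, x+k₃] : Matrix (Fin 6) (Fin 6) ℝ).det := by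
    have hNx : (charmatrix M).map (evalRingHom x)
        = !![x+k₁, k₂, 0, 0, -k₄, 0;
            k₂/2, x+(k₁+k₃)/2, k₂/2, k₄/2, 0, -(k₄/2);
            0, k₂, x+k₃, 0, k₄, 0;
            0, k₄, 0, x+k₁, k₂, 0;
            -(k₄/2), 0, k₄/2, k₂/2, x+(k₁+k₃)/2, k₂/2;
            0, -k₄, 0, 0, k₂, x+k₃] := by
      subst hM
      ext i j
      fin_cases i <;> fin_cases j <;>
      simp only [Matrix.map_apply, charmatrix_apply, Matrix.diagonal, Matrix.of_apply,
        Matrix.smul_apply, Matrix.cons_val', Matrix.cons_val_zero, Matrix.cons_val_one,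
        Matrix.head_cons, Matrix.cons_val_two, Matrix.cons_val_three, Matrix.tail_cons,
        Matrix.head_fin_const, Matrix.empty_val', Matrix.cons_val_fin_one, Matrix.cons_val_succ,
        eval_sub, eval_X, eval_C, coe_evalRingHom, smul_eq_mul, Fin.isValue] <;>
        norm_num [Fin.ext_iff] <;> ring
    rw [Matrix.charpoly, ← Polynomial.coe_evalRingHom, RingHom.map_det, RingHom.mapMatrix_apply, hNx]
  rw [hev]
  simp only [eval_mul, eval_pow, eval_add, eval_C, eval_X]
  -- pass to ℂ
  set Pc : Matrix (Fin 3) (Fin 3) ℂ :=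
    !![(x:ℂ)+k₁, k₂, 0; k₂/2, (x:ℂ)+(k₁+k₃)/2, k₂/2; 0, k₂, (x:ℂ)+k₃] with hPc
  set Qc : Matrix (Fin 3) (Fin 3) ℂ :=
    !![0, -(k₄:ℂ), 0; k₄/2, 0, -((k₄:ℂ)/2); 0, k₄, 0] with hQc
  set U : Matrix (Fin 3) (Fin 3) ℂ := Pc + Complex.I • Qc with hU
  set W : Matrix (Fin 3) (Fin 3) ℂ := Pc - Complex.I • Qc with hW
  set Vb : Matrix (Fin 3 ⊕ Fin 3) (Fin 3 ⊕ Fin 3) ℂ :=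
    Matrix.fromBlocks 1 1 (Complex.I • 1) ((-Complex.I) • 1) with hVb
  have hb1 : Pc * 1 + Qc * (Complex.I • 1) = U := by
    rw [Matrix.mul_smul, Matrix.mul_one, Matrix.mul_one, hU]
  have hb2 : Pc * 1 + Qc * ((-Complex.I) • 1) = W := by
    rw [Matrix.mul_smul, Matrix.mul_one, Matrix.mul_one, hW, neg_smul, ← sub_eq_add_neg]
  have hb3 : (-Qc) * 1 + Pc * (Complex.I • 1) = Complex.I • U := by
    rw [Matrix.mul_smul, Matrix.mul_one, Matrix.mul_one, hU, smul_add, smul_smul,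
      Complex.I_mul_I, neg_one_smul]
    abel
  have hb4 : (-Qc) * 1 + Pc * ((-Complex.I) • 1) = (-Complex.I) • W := by
    rw [Matrix.mul_smul, Matrix.mul_one, Matrix.mul_one, hW, smul_sub, smul_smul,
      neg_mul, Complex.I_mul_I, neg_neg, one_smul, neg_smul]
    abel
  have hNV : (Matrix.fromBlocks Pc Qc (-Qc) Pc) * Vb
      = Vb * (Matrix.fromBlocks U 0 0 W) := by
    rw [hVb, Matrix.fromBlocks_multiply, Matrix.fromBlocks_multiply]
    simp only [Matrix.one_mul, Matrix.mul_zero, add_zero, zero_add, Matrix.smul_mul, smul_zero]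
    rw [hb1, hb2, hb3, hb4]
  have hVdet : Vb.det = 8 * Complex.I := by
    rw [hVb, Matrix.det_fromBlocks_one₁₁, Matrix.mul_one]
    have h1 : (-Complex.I) • (1 : Matrix (Fin 3) (Fin 3) ℂ) - Complex.I • 1
        = (-(2*Complex.I)) • 1 := by
      rw [← sub_smul]; congr 1; ring
    rw [h1, Matrix.smul_one_eq_diagonal, Matrix.det_diagonal]
    simp only [Finset.prod_const, Finset.card_univ, Fintype.card_fin]
    linear_combination (-8*Complex.I) * Complex.I_sq
  have hVne : Vb.det ≠ 0 := by
    rw [hVdet]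
    exact mul_ne_zero (by norm_num) Complex.I_ne_zero
  have hNdet : (Matrix.fromBlocks Pc Qc (-Qc) Pc).det = U.det * W.det := by
    have h := congrArg Matrix.det hNV
    rw [Matrix.det_mul, Matrix.det_mul, Matrix.det_fromBlocks_zero₂₁, mul_comm] at h
    exact mul_left_cancel₀ hVne h
  have hUe : U = !![(x:ℂ)+k₁, k₂ - Complex.I*k₄, 0;
        k₂/2 + Complex.I*(k₄/2), (x:ℂ)+(k₁+k₃)/2, k₂/2 - Complex.I*(k₄/2);
        0, k₂ + Complex.I*k₄, (x:ℂ)+k₃] := by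
    rw [hU, hPc, hQc]
    ext i j
    fin_cases i <;> fin_cases j <;> simp <;> ring
  have hWe : W = !![(x:ℂ)+k₁, k₂ + Complex.I*k₄, 0;
        k₂/2 - Complex.I*(k₄/2), (x:ℂ)+(k₁+k₃)/2, k₂/2 + Complex.I*(k₄/2);
        0, k₂ - Complex.I*k₄, (x:ℂ)+k₃] := by
    rw [hW, hPc, hQc]
    ext i j
    fin_cases i <;> fin_cases j <;> simp <;> ring
  have hmap : (!![x+k₁, k₂, 0, 0, -k₄, 0;
            k₂/2, x+(k₁+k₃)/2, k₂/2, k₄/2, 0, -(k₄/2);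
            0, k₂, x+k₃, 0, k₄, 0;
            0, k₄, 0, x+k₁, k₂, 0;
            -(k₄/2), 0, k₄/2, k₂/2, x+(k₁+k₃)/2, k₂/2;
            0, -k₄, 0, 0, k₂, x+k₃] : Matrix (Fin 6) (Fin 6) ℝ).map Complex.ofRealHom
      = Matrix.reindex finSumFinEquiv finSumFinEquiv (Matrix.fromBlocks Pc Qc (-Qc) Pc) := by
    rw [hPc, hQc]
    ext i j
    fin_cases i <;> fin_cases j <;>
      norm_num [Matrix.fromBlocks, finSumFinEquiv, Fin.addCases, Fin.subNat, Fin.castLT,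
        Sum.elim]
  have hC : ((!![x+k₁, k₂, 0, 0, -k₄, 0;
            k₂/2, x+(k₁+k₃)/2, k₂/2, k₄/2, 0, -(k₄/2);
            0, k₂, x+k₃, 0, k₄, 0;
            0, k₄, 0, x+k₁, k₂, 0;
            -(k₄/2), 0, k₄/2, k₂/2, x+(k₁+k₃)/2, k₂/2;
            0, -k₄, 0, 0, k₂, x+k₃] : Matrix (Fin 6) (Fin 6) ℝ).det : ℂ)
      = ((x + (k₁ + k₃) / 2) ^ 2 * ((x ^ 2 + (k₁ + k₃) * x + (k₁ * k₃ - k₂ ^ 2 - k₄ ^ 2))) ^ 2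
          : ℝ) := by
    rw [show ((((!![x+k₁, k₂, 0, 0, -k₄, 0;
            k₂/2, x+(k₁+k₃)/2, k₂/2, k₄/2, 0, -(k₄/2);
            0, k₂, x+k₃, 0, k₄, 0;
            0, k₄, 0, x+k₁, k₂, 0;
            -(k₄/2), 0, k₄/2, k₂/2, x+(k₁+k₃)/2, k₂/2;
            0, -k₄, 0, 0, k₂, x+k₃] : Matrix (Fin 6) (Fin 6) ℝ).det : ℂ))
        = Complex.ofRealHom (!![x+k₁, k₂, 0, 0, -k₄, 0;
            k₂/2, x+(k₁+k₃)/2, k₂/2, k₄/2, 0, -(k₄/2);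
            0, k₂, x+k₃, 0, k₄, 0;
            0, k₄, 0, x+k₁, k₂, 0;
            -(k₄/2), 0, k₄/2, k₂/2, x+(k₁+k₃)/2, k₂/2;
            0, -k₄, 0, 0, k₂, x+k₃] : Matrix (Fin 6) (Fin 6) ℝ).det) from rfl,
      RingHom.map_det, RingHom.mapMatrix_apply, hmap, Matrix.det_reindex_self, hNdet, hUe, hWe, aux_detUW]
    push_cast
    ring
  have := Complex.ofReal_injective hC
  rw [this]
end

section
/- For m > 0 let φ₀(λ) = (m/(2(2+m)))·λ(1−λ)·(4 + 2m − m(4+3m)λ(1−λ)), c₀ = 2m², and for λ ∈ (0,1) set ℱ_m(φ₀,c₀)(λ) = φ₀''(λ) + 2m·φ₀'(λ)/(1+mλ) + m²/(1+mλ) + 4m/(2+m) − (c₀/m²)·exp(∫_{1/2}^λ m/φ₀(x) dx)/(1+mλ)·((φ₀'(λ)+m)² + φ₀(λ)·φ₀''(λ)). Then there exist constants C > 0 and m₀ > 0 such that for all m ∈ (0, m₀] and all λ ∈ (0,1), |ℱ_m(φ₀,c₀)(λ)| ≤ C·m³; that is, (φ₀, c₀) is an approximate solution of ℱ_m = 0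 to order m³. -/
set_option maxHeartbeats 2000000


/-- The approximate momentum profile
`φ₀(λ) = (m/(2(2+m)))·λ(1-λ)·(4 + 2m - m(4+3m)λ(1-λ))`. -/
noncomputable def phi0 (m : ℝ) : ℝ → ℝ := fun l =>
  (m / (2 * (2 + m))) * (l * (1 - l)) * (4 + 2 * m - m * (4 + 3 * m) * (l * (1 - l)))

/-- The adiabatic-limit operator `ℱ_m` evaluated at the approximate solution
`(φ₀, c₀)` with `c₀ = 2m²`. -/
noncomputable def Fm0 (m : ℝ) (l : ℝ) : ℝ :=
  deriv (deriv (phi0 m)) l + 2 * m * deriv (phi0 m) l / (1 + m * l) + m ^ 2 / (1 + m * l)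
    + 4 * m / (2 + m)
    - ((2 * m ^ 2) / m ^ 2) * Real.exp (∫ x in (1 / 2 : ℝ)..l, m / phi0 m x) / (1 + m * l) *
        ((deriv (phi0 m) l + m) ^ 2 + phi0 m l * deriv (deriv (phi0 m)) l)

/-- First derivative of `phi0`. -/
noncomputable def p1 (m : ℝ) : ℝ → ℝ := fun l =>
  (m / (2 * (2 + m))) * ((1 - 2*l) * (4 + 2*m - 2*(m*(4+3*m))*(l*(1-l))))

/-- Second derivative of `phi0`. -/
noncomputable def p2 (m : ℝ) : ℝ → ℝ := fun l =>
  (m / (2 * (2 + m))) * ((-2) * (4 + 2*m - 2*(m*(4+3*m))*(l*(1-l)))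
    + (1 - 2*l) * (-(2*(m*(4+3*m)))*(1-2*l)))

/-- The polynomial `s3` with `R·4(2+m)²(1+ml) = m³·s3`. -/
noncomputable def s3 (m : ℝ) (l : ℝ) : ℝ :=
  l*(-64 - 104*m - 36*m^2) + l^2*(656 + 856*m + 264*m^2)
  + l^3*(-1536 - 2112*m - 864*m^2 - 108*m^3) + l^4*(960 + 2288*m + 1992*m^2 + 612*m^3)
  + l^5*(-1792*m - 2688*m^2 - 1008*m^3) + l^6*(896*m + 1344*m^2 + 504*m^3)

/-- The polynomial `q2` with `(l/(1-l))·((φ₀'+m)² + φ₀φ₀'') = m²·q2/(4(2+m)²)`. -/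
noncomputable def q2 (m : ℝ) (l : ℝ) : ℝ :=
  l*(64 + 64*m + 16*m^2) + l^2*(-96 - 256*m - 224*m^2 - 60*m^3)
  + l^3*(608*m + 856*m^2 + 372*m^3 + 54*m^4) + l^4*(-480*m - 1144*m^2 - 996*m^3 - 306*m^4)
  + l^5*(896*m^2 + 1344*m^3 + 504*m^4) + l^6*(-448*m^2 - 672*m^3 - 252*m^4)

lemma hasDerivAt_u (l : ℝ) : HasDerivAt (fun x : ℝ => x * (1 - x)) (1 - 2*l) l := by
  have h := (hasDerivAt_id l).mul ((hasDerivAt_const l (1:ℝ)).sub (hasDerivAt_id l))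
  refine h.congr_deriv ?_
  simp only [id_eq, Pi.sub_apply]
  ring

lemma hasDerivAt_phi0 (m l : ℝ) : HasDerivAt (phi0 m) (p1 m l) l := by
  have h1 := (hasDerivAt_u l).const_mul (m / (2 * (2 + m)))
  have h2 := (hasDerivAt_const l ((4:ℝ) + 2*m)).sub ((hasDerivAt_u l).const_mul (m*(4+3*m)))
  have h3 := h1.mul h2
  refine h3.congr_deriv ?_
  simp only [p1, Pi.sub_apply]
  ring

lemma hasDerivAt_p1 (m l : ℝ) : HasDerivAt (p1 m) (p2 m l) l := by
  have hv : HasDerivAt (fun x : ℝ => 1 - 2*x) (-2) l := by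
    have h := (hasDerivAt_const l (1:ℝ)).sub ((hasDerivAt_id l).const_mul 2)
    refine h.congr_deriv ?_
    try simp only [id_eq]
    ring
  have hw := (hasDerivAt_const l ((4:ℝ) + 2*m)).sub
    ((hasDerivAt_u l).const_mul (2*(m*(4+3*m))))
  have h3 := (hv.mul hw).const_mul (m / (2 * (2 + m)))
  refine h3.congr_deriv ?_
  simp only [p2, Pi.sub_apply]
  ring

lemma deriv_phi0 (m : ℝ) : deriv (phi0 m) = p1 m :=
  funext fun l => (hasDerivAt_phi0 m l).deriv

lemma deriv2_phi0 (m l : ℝ) : deriv (deriv (phi0 m)) l = p2 m l := by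
  rw [deriv_phi0]
  exact (hasDerivAt_p1 m l).deriv

lemma s3_abs_le {m l : ℝ} (hm0 : 0 ≤ m) (hm1 : m ≤ 1) (hl0 : 0 ≤ l) (hl1 : l ≤ 1) :
    |s3 m l| ≤ 20684 := by
  rw [abs_le, s3]
  constructor <;>
  · have hb10 : 0 ≤ l^1*m^0 ∧ l^1*m^0 ≤ 1 := ⟨mul_nonneg (pow_nonneg hl0 _) (pow_nonneg hm0 _), mul_le_one₀ (pow_le_one₀ hl0 hl1) (pow_nonneg hm0 _) (pow_le_one₀ hm0 hm1)⟩
    have hb11 : 0 ≤ l^1*m^1 ∧ l^1*m^1 ≤ 1 := ⟨mul_nonneg (pow_nonneg hl0 _) (pow_nonneg hm0 _), mul_le_one₀ (pow_le_one₀ hl0 hl1) (pow_nonneg hm0 _) (pow_le_one₀ hm0 hm1)⟩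
    have hb12 : 0 ≤ l^1*m^2 ∧ l^1*m^2 ≤ 1 := ⟨mul_nonneg (pow_nonneg hl0 _) (pow_nonneg hm0 _), mul_le_one₀ (pow_le_one₀ hl0 hl1) (pow_nonneg hm0 _) (pow_le_one₀ hm0 hm1)⟩
    have hb13 : 0 ≤ l^1*m^3 ∧ l^1*m^3 ≤ 1 := ⟨mul_nonneg (pow_nonneg hl0 _) (pow_nonneg hm0 _), mul_le_one₀ (pow_le_one₀ hl0 hl1) (pow_nonneg hm0 _) (pow_le_one₀ hm0 hm1)⟩
    have hb14 : 0 ≤ l^1*m^4 ∧ l^1*m^4 ≤ 1 := ⟨mul_nonneg (pow_nonneg hl0 _) (pow_nonneg hm0 _), mul_le_one₀ (pow_le_one₀ hl0 hl1) (pow_nonneg hm0 _) (pow_le_one₀ hm0 hm1)⟩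
    have hb20 : 0 ≤ l^2*m^0 ∧ l^2*m^0 ≤ 1 := ⟨mul_nonneg (pow_nonneg hl0 _) (pow_nonneg hm0 _), mul_le_one₀ (pow_le_one₀ hl0 hl1) (pow_nonneg hm0 _) (pow_le_one₀ hm0 hm1)⟩
    have hb21 : 0 ≤ l^2*m^1 ∧ l^2*m^1 ≤ 1 := ⟨mul_nonneg (pow_nonneg hl0 _) (pow_nonneg hm0 _), mul_le_one₀ (pow_le_one₀ hl0 hl1) (pow_nonneg hm0 _) (pow_le_one₀ hm0 hm1)⟩
    have hb22 : 0 ≤ l^2*m^2 ∧ l^2*m^2 ≤ 1 := ⟨mul_nonneg (pow_nonneg hl0 _) (pow_nonneg hm0 _), mul_le_one₀ (pow_le_one₀ hl0 hl1) (pow_nonneg hm0 _) (pow_le_one₀ hm0 hm1)⟩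
    have hb23 : 0 ≤ l^2*m^3 ∧ l^2*m^3 ≤ 1 := ⟨mul_nonneg (pow_nonneg hl0 _) (pow_nonneg hm0 _), mul_le_one₀ (pow_le_one₀ hl0 hl1) (pow_nonneg hm0 _) (pow_le_one₀ hm0 hm1)⟩
    have hb24 : 0 ≤ l^2*m^4 ∧ l^2*m^4 ≤ 1 := ⟨mul_nonneg (pow_nonneg hl0 _) (pow_nonneg hm0 _), mul_le_one₀ (pow_le_one₀ hl0 hl1) (pow_nonneg hm0 _) (pow_le_one₀ hm0 hm1)⟩
    have hb30 : 0 ≤ l^3*m^0 ∧ l^3*m^0 ≤ 1 := ⟨mul_nonneg (pow_nonneg hl0 _) (pow_nonneg hm0 _), mul_le_one₀ (pow_le_one₀ hl0 hl1) (pow_nonneg hm0 _) (pow_le_one₀ hm0 hm1)⟩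
    have hb31 : 0 ≤ l^3*m^1 ∧ l^3*m^1 ≤ 1 := ⟨mul_nonneg (pow_nonneg hl0 _) (pow_nonneg hm0 _), mul_le_one₀ (pow_le_one₀ hl0 hl1) (pow_nonneg hm0 _) (pow_le_one₀ hm0 hm1)⟩
    have hb32 : 0 ≤ l^3*m^2 ∧ l^3*m^2 ≤ 1 := ⟨mul_nonneg (pow_nonneg hl0 _) (pow_nonneg hm0 _), mul_le_one₀ (pow_le_one₀ hl0 hl1) (pow_nonneg hm0 _) (pow_le_one₀ hm0 hm1)⟩
    have hb33 : 0 ≤ l^3*m^3 ∧ l^3*m^3 ≤ 1 := ⟨mul_nonneg (pow_nonneg hl0 _) (pow_nonneg hm0 _), mul_le_one₀ (pow_le_one₀ hl0 hl1) (pow_nonneg hm0 _) (pow_le_one₀ hm0 hm1)⟩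
    have hb34 : 0 ≤ l^3*m^4 ∧ l^3*m^4 ≤ 1 := ⟨mul_nonneg (pow_nonneg hl0 _) (pow_nonneg hm0 _), mul_le_one₀ (pow_le_one₀ hl0 hl1) (pow_nonneg hm0 _) (pow_le_one₀ hm0 hm1)⟩
    have hb40 : 0 ≤ l^4*m^0 ∧ l^4*m^0 ≤ 1 := ⟨mul_nonneg (pow_nonneg hl0 _) (pow_nonneg hm0 _), mul_le_one₀ (pow_le_one₀ hl0 hl1) (pow_nonneg hm0 _) (pow_le_one₀ hm0 hm1)⟩
    have hb41 : 0 ≤ l^4*m^1 ∧ l^4*m^1 ≤ 1 := ⟨mul_nonneg (pow_nonneg hl0 _) (pow_nonneg hm0 _), mul_le_one₀ (pow_le_one₀ hl0 hl1) (pow_nonneg hm0 _) (pow_le_one₀ hm0 hm1)⟩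
    have hb42 : 0 ≤ l^4*m^2 ∧ l^4*m^2 ≤ 1 := ⟨mul_nonneg (pow_nonneg hl0 _) (pow_nonneg hm0 _), mul_le_one₀ (pow_le_one₀ hl0 hl1) (pow_nonneg hm0 _) (pow_le_one₀ hm0 hm1)⟩
    have hb43 : 0 ≤ l^4*m^3 ∧ l^4*m^3 ≤ 1 := ⟨mul_nonneg (pow_nonneg hl0 _) (pow_nonneg hm0 _), mul_le_one₀ (pow_le_one₀ hl0 hl1) (pow_nonneg hm0 _) (pow_le_one₀ hm0 hm1)⟩
    have hb44 : 0 ≤ l^4*m^4 ∧ l^4*m^4 ≤ 1 := ⟨mul_nonneg (pow_nonneg hl0 _) (pow_nonneg hm0 _), mul_le_one₀ (pow_le_one₀ hl0 hl1) (pow_nonneg hm0 _) (pow_le_one₀ hm0 hm1)⟩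
    have hb50 : 0 ≤ l^5*m^0 ∧ l^5*m^0 ≤ 1 := ⟨mul_nonneg (pow_nonneg hl0 _) (pow_nonneg hm0 _), mul_le_one₀ (pow_le_one₀ hl0 hl1) (pow_nonneg hm0 _) (pow_le_one₀ hm0 hm1)⟩
    have hb51 : 0 ≤ l^5*m^1 ∧ l^5*m^1 ≤ 1 := ⟨mul_nonneg (pow_nonneg hl0 _) (pow_nonneg hm0 _), mul_le_one₀ (pow_le_one₀ hl0 hl1) (pow_nonneg hm0 _) (pow_le_one₀ hm0 hm1)⟩
    have hb52 : 0 ≤ l^5*m^2 ∧ l^5*m^2 ≤ 1 := ⟨mul_nonneg (pow_nonneg hl0 _) (pow_nonneg hm0 _), mul_le_one₀ (pow_le_one₀ hl0 hl1) (pow_nonneg hm0 _) (pow_le_one₀ hm0 hm1)⟩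
    have hb53 : 0 ≤ l^5*m^3 ∧ l^5*m^3 ≤ 1 := ⟨mul_nonneg (pow_nonneg hl0 _) (pow_nonneg hm0 _), mul_le_one₀ (pow_le_one₀ hl0 hl1) (pow_nonneg hm0 _) (pow_le_one₀ hm0 hm1)⟩
    have hb54 : 0 ≤ l^5*m^4 ∧ l^5*m^4 ≤ 1 := ⟨mul_nonneg (pow_nonneg hl0 _) (pow_nonneg hm0 _), mul_le_one₀ (pow_le_one₀ hl0 hl1) (pow_nonneg hm0 _) (pow_le_one₀ hm0 hm1)⟩
    have hb60 : 0 ≤ l^6*m^0 ∧ l^6*m^0 ≤ 1 := ⟨mul_nonneg (pow_nonneg hl0 _) (pow_nonneg hm0 _), mul_le_one₀ (pow_le_one₀ hl0 hl1) (pow_nonneg hm0 _) (pow_le_one₀ hm0 hm1)⟩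
    have hb61 : 0 ≤ l^6*m^1 ∧ l^6*m^1 ≤ 1 := ⟨mul_nonneg (pow_nonneg hl0 _) (pow_nonneg hm0 _), mul_le_one₀ (pow_le_one₀ hl0 hl1) (pow_nonneg hm0 _) (pow_le_one₀ hm0 hm1)⟩
    have hb62 : 0 ≤ l^6*m^2 ∧ l^6*m^2 ≤ 1 := ⟨mul_nonneg (pow_nonneg hl0 _) (pow_nonneg hm0 _), mul_le_one₀ (pow_le_one₀ hl0 hl1) (pow_nonneg hm0 _) (pow_le_one₀ hm0 hm1)⟩
    have hb63 : 0 ≤ l^6*m^3 ∧ l^6*m^3 ≤ 1 := ⟨mul_nonneg (pow_nonneg hl0 _) (pow_nonneg hm0 _), mul_le_one₀ (pow_le_one₀ hl0 hl1) (pow_nonneg hm0 _) (pow_le_one₀ hm0 hm1)⟩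
    have hb64 : 0 ≤ l^6*m^4 ∧ l^6*m^4 ≤ 1 := ⟨mul_nonneg (pow_nonneg hl0 _) (pow_nonneg hm0 _), mul_le_one₀ (pow_le_one₀ hl0 hl1) (pow_nonneg hm0 _) (pow_le_one₀ hm0 hm1)⟩
    linarith [hb10.1, hb10.2, hb11.1, hb11.2, hb12.1, hb12.2, hb13.1, hb13.2, hb14.1, hb14.2, hb20.1, hb20.2, hb21.1, hb21.2, hb22.1, hb22.2, hb23.1, hb23.2, hb24.1, hb24.2, hb30.1, hb30.2, hb31.1, hb31.2, hb32.1, hb32.2, hb33.1, hb33.2, hb34.1, hb34.2, hb40.1, hb40.2, hb41.1, hb41.2, hb42.1, hb42.2, hb43.1, hb43.2, hb44.1, hb44.2, hb50.1, hb50.2, hb51.1, hb51.2, hb52.1, hb52.2, hb53.1, hb53.2, hb54.1, hb54.2, hb60.1, hb60.2, hb61.1, hb61.2, hb62.1, hb62.2, hb63.1, hb63.2, hb64.1, hb64.2]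

lemma q2_abs_le {m l : ℝ} (hm0 : 0 ≤ m) (hm1 : m ≤ 1) (hl0 : 0 ≤ l) (hl1 : l ≤ 1) :
    |q2 m l| ≤ 9712 := by
  rw [abs_le, q2]
  constructor <;>
  · have hb10 : 0 ≤ l^1*m^0 ∧ l^1*m^0 ≤ 1 := ⟨mul_nonneg (pow_nonneg hl0 _) (pow_nonneg hm0 _), mul_le_one₀ (pow_le_one₀ hl0 hl1) (pow_nonneg hm0 _) (pow_le_one₀ hm0 hm1)⟩
    have hb11 : 0 ≤ l^1*m^1 ∧ l^1*m^1 ≤ 1 := ⟨mul_nonneg (pow_nonneg hl0 _) (pow_nonneg hm0 _), mul_le_one₀ (pow_le_one₀ hl0 hl1) (pow_nonneg hm0 _) (pow_le_one₀ hm0 hm1)⟩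
    have hb12 : 0 ≤ l^1*m^2 ∧ l^1*m^2 ≤ 1 := ⟨mul_nonneg (pow_nonneg hl0 _) (pow_nonneg hm0 _), mul_le_one₀ (pow_le_one₀ hl0 hl1) (pow_nonneg hm0 _) (pow_le_one₀ hm0 hm1)⟩
    have hb13 : 0 ≤ l^1*m^3 ∧ l^1*m^3 ≤ 1 := ⟨mul_nonneg (pow_nonneg hl0 _) (pow_nonneg hm0 _), mul_le_one₀ (pow_le_one₀ hl0 hl1) (pow_nonneg hm0 _) (pow_le_one₀ hm0 hm1)⟩
    have hb14 : 0 ≤ l^1*m^4 ∧ l^1*m^4 ≤ 1 := ⟨mul_nonneg (pow_nonneg hl0 _) (pow_nonneg hm0 _), mul_le_one₀ (pow_le_one₀ hl0 hl1) (pow_nonneg hm0 _) (pow_le_one₀ hm0 hm1)⟩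
    have hb20 : 0 ≤ l^2*m^0 ∧ l^2*m^0 ≤ 1 := ⟨mul_nonneg (pow_nonneg hl0 _) (pow_nonneg hm0 _), mul_le_one₀ (pow_le_one₀ hl0 hl1) (pow_nonneg hm0 _) (pow_le_one₀ hm0 hm1)⟩
    have hb21 : 0 ≤ l^2*m^1 ∧ l^2*m^1 ≤ 1 := ⟨mul_nonneg (pow_nonneg hl0 _) (pow_nonneg hm0 _), mul_le_one₀ (pow_le_one₀ hl0 hl1) (pow_nonneg hm0 _) (pow_le_one₀ hm0 hm1)⟩
    have hb22 : 0 ≤ l^2*m^2 ∧ l^2*m^2 ≤ 1 := ⟨mul_nonneg (pow_nonneg hl0 _) (pow_nonneg hm0 _), mul_le_one₀ (pow_le_one₀ hl0 hl1) (pow_nonneg hm0 _) (pow_le_one₀ hm0 hm1)⟩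
    have hb23 : 0 ≤ l^2*m^3 ∧ l^2*m^3 ≤ 1 := ⟨mul_nonneg (pow_nonneg hl0 _) (pow_nonneg hm0 _), mul_le_one₀ (pow_le_one₀ hl0 hl1) (pow_nonneg hm0 _) (pow_le_one₀ hm0 hm1)⟩
    have hb24 : 0 ≤ l^2*m^4 ∧ l^2*m^4 ≤ 1 := ⟨mul_nonneg (pow_nonneg hl0 _) (pow_nonneg hm0 _), mul_le_one₀ (pow_le_one₀ hl0 hl1) (pow_nonneg hm0 _) (pow_le_one₀ hm0 hm1)⟩
    have hb30 : 0 ≤ l^3*m^0 ∧ l^3*m^0 ≤ 1 := ⟨mul_nonneg (pow_nonneg hl0 _) (pow_nonneg hm0 _), mul_le_one₀ (pow_le_one₀ hl0 hl1) (pow_nonneg hm0 _) (pow_le_one₀ hm0 hm1)⟩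
    have hb31 : 0 ≤ l^3*m^1 ∧ l^3*m^1 ≤ 1 := ⟨mul_nonneg (pow_nonneg hl0 _) (pow_nonneg hm0 _), mul_le_one₀ (pow_le_one₀ hl0 hl1) (pow_nonneg hm0 _) (pow_le_one₀ hm0 hm1)⟩
    have hb32 : 0 ≤ l^3*m^2 ∧ l^3*m^2 ≤ 1 := ⟨mul_nonneg (pow_nonneg hl0 _) (pow_nonneg hm0 _), mul_le_one₀ (pow_le_one₀ hl0 hl1) (pow_nonneg hm0 _) (pow_le_one₀ hm0 hm1)⟩
    have hb33 : 0 ≤ l^3*m^3 ∧ l^3*m^3 ≤ 1 := ⟨mul_nonneg (pow_nonneg hl0 _) (pow_nonneg hm0 _), mul_le_one₀ (pow_le_one₀ hl0 hl1) (pow_nonneg hm0 _) (pow_le_one₀ hm0 hm1)⟩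
    have hb34 : 0 ≤ l^3*m^4 ∧ l^3*m^4 ≤ 1 := ⟨mul_nonneg (pow_nonneg hl0 _) (pow_nonneg hm0 _), mul_le_one₀ (pow_le_one₀ hl0 hl1) (pow_nonneg hm0 _) (pow_le_one₀ hm0 hm1)⟩
    have hb40 : 0 ≤ l^4*m^0 ∧ l^4*m^0 ≤ 1 := ⟨mul_nonneg (pow_nonneg hl0 _) (pow_nonneg hm0 _), mul_le_one₀ (pow_le_one₀ hl0 hl1) (pow_nonneg hm0 _) (pow_le_one₀ hm0 hm1)⟩
    have hb41 : 0 ≤ l^4*m^1 ∧ l^4*m^1 ≤ 1 := ⟨mul_nonneg (pow_nonneg hl0 _) (pow_nonneg hm0 _), mul_le_one₀ (pow_le_one₀ hl0 hl1) (pow_nonneg hm0 _) (pow_le_one₀ hm0 hm1)⟩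
    have hb42 : 0 ≤ l^4*m^2 ∧ l^4*m^2 ≤ 1 := ⟨mul_nonneg (pow_nonneg hl0 _) (pow_nonneg hm0 _), mul_le_one₀ (pow_le_one₀ hl0 hl1) (pow_nonneg hm0 _) (pow_le_one₀ hm0 hm1)⟩
    have hb43 : 0 ≤ l^4*m^3 ∧ l^4*m^3 ≤ 1 := ⟨mul_nonneg (pow_nonneg hl0 _) (pow_nonneg hm0 _), mul_le_one₀ (pow_le_one₀ hl0 hl1) (pow_nonneg hm0 _) (pow_le_one₀ hm0 hm1)⟩
    have hb44 : 0 ≤ l^4*m^4 ∧ l^4*m^4 ≤ 1 := ⟨mul_nonneg (pow_nonneg hl0 _) (pow_nonneg hm0 _), mul_le_one₀ (pow_le_one₀ hl0 hl1) (pow_nonneg hm0 _) (pow_le_one₀ hm0 hm1)⟩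
    have hb50 : 0 ≤ l^5*m^0 ∧ l^5*m^0 ≤ 1 := ⟨mul_nonneg (pow_nonneg hl0 _) (pow_nonneg hm0 _), mul_le_one₀ (pow_le_one₀ hl0 hl1) (pow_nonneg hm0 _) (pow_le_one₀ hm0 hm1)⟩
    have hb51 : 0 ≤ l^5*m^1 ∧ l^5*m^1 ≤ 1 := ⟨mul_nonneg (pow_nonneg hl0 _) (pow_nonneg hm0 _), mul_le_one₀ (pow_le_one₀ hl0 hl1) (pow_nonneg hm0 _) (pow_le_one₀ hm0 hm1)⟩
    have hb52 : 0 ≤ l^5*m^2 ∧ l^5*m^2 ≤ 1 := ⟨mul_nonneg (pow_nonneg hl0 _) (pow_nonneg hm0 _), mul_le_one₀ (pow_le_one₀ hl0 hl1) (pow_nonneg hm0 _) (pow_le_one₀ hm0 hm1)⟩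
    have hb53 : 0 ≤ l^5*m^3 ∧ l^5*m^3 ≤ 1 := ⟨mul_nonneg (pow_nonneg hl0 _) (pow_nonneg hm0 _), mul_le_one₀ (pow_le_one₀ hl0 hl1) (pow_nonneg hm0 _) (pow_le_one₀ hm0 hm1)⟩
    have hb54 : 0 ≤ l^5*m^4 ∧ l^5*m^4 ≤ 1 := ⟨mul_nonneg (pow_nonneg hl0 _) (pow_nonneg hm0 _), mul_le_one₀ (pow_le_one₀ hl0 hl1) (pow_nonneg hm0 _) (pow_le_one₀ hm0 hm1)⟩
    have hb60 : 0 ≤ l^6*m^0 ∧ l^6*m^0 ≤ 1 := ⟨mul_nonneg (pow_nonneg hl0 _) (pow_nonneg hm0 _), mul_le_one₀ (pow_le_one₀ hl0 hl1) (pow_nonneg hm0 _) (pow_le_one₀ hm0 hm1)⟩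
    have hb61 : 0 ≤ l^6*m^1 ∧ l^6*m^1 ≤ 1 := ⟨mul_nonneg (pow_nonneg hl0 _) (pow_nonneg hm0 _), mul_le_one₀ (pow_le_one₀ hl0 hl1) (pow_nonneg hm0 _) (pow_le_one₀ hm0 hm1)⟩
    have hb62 : 0 ≤ l^6*m^2 ∧ l^6*m^2 ≤ 1 := ⟨mul_nonneg (pow_nonneg hl0 _) (pow_nonneg hm0 _), mul_le_one₀ (pow_le_one₀ hl0 hl1) (pow_nonneg hm0 _) (pow_le_one₀ hm0 hm1)⟩
    have hb63 : 0 ≤ l^6*m^3 ∧ l^6*m^3 ≤ 1 := ⟨mul_nonneg (pow_nonneg hl0 _) (pow_nonneg hm0 _), mul_le_one₀ (pow_le_one₀ hl0 hl1) (pow_nonneg hm0 _) (pow_le_one₀ hm0 hm1)⟩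
    have hb64 : 0 ≤ l^6*m^4 ∧ l^6*m^4 ≤ 1 := ⟨mul_nonneg (pow_nonneg hl0 _) (pow_nonneg hm0 _), mul_le_one₀ (pow_le_one₀ hl0 hl1) (pow_nonneg hm0 _) (pow_le_one₀ hm0 hm1)⟩
    linarith [hb10.1, hb10.2, hb11.1, hb11.2, hb12.1, hb12.2, hb13.1, hb13.2, hb14.1, hb14.2, hb20.1, hb20.2, hb21.1, hb21.2, hb22.1, hb22.2, hb23.1, hb23.2, hb24.1, hb24.2, hb30.1, hb30.2, hb31.1, hb31.2, hb32.1, hb32.2, hb33.1, hb33.2, hb34.1, hb34.2, hb40.1, hb40.2, hb41.1, hb41.2, hb42.1, hb42.2, hb43.1, hb43.2, hb44.1, hb44.2, hb50.1, hb50.2, hb51.1, hb51.2, hb52.1, hb52.2, hb53.1, hb53.2, hb54.1, hb54.2, hb60.1, hb60.2, hb61.1, hb61.2, hb62.1, hb62.2, hb63.1, hb63.2, hb64.1, hb64.2]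

/-- `(φ₀, c₀) = (φ₀, 2m²)` is an approximate solution of `ℱ_m = 0` to order `m³`: there
are `C > 0` and `m₀ > 0` such that `|ℱ_m(φ₀, c₀)(λ)| ≤ C m³` for all `0 < m ≤ m₀` and all
`λ ∈ (0,1)`. -/
theorem stmt16 :
    ∃ C > (0 : ℝ), ∃ m₀ > (0 : ℝ), ∀ m ∈ Set.Ioc (0 : ℝ) m₀, ∀ l ∈ Set.Ioo (0 : ℝ) 1,
      |Fm0 m l| ≤ C * m ^ 3 := by
  refine ⟨4000, by norm_num, 1, by norm_num, ?_⟩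
  rintro m ⟨hm, hm1⟩ l ⟨hl0, hl1⟩
  have hm0 : m ≠ 0 := ne_of_gt hm
  have h2m : (0:ℝ) < 2 + m := by linarith
  have h1l : (0:ℝ) < 1 - l := by linarith
  have h1ml : (1:ℝ) ≤ 1 + m * l := by nlinarith
  -- the auxiliary integrand
  set g : ℝ → ℝ := fun x => m * (4 + 3*m) / (4 + 2*m - m*(4+3*m) * (x*(1-x))) with hg
  -- denominator bound, valid for all real x
  have hden : ∀ x : ℝ, (4:ℝ) ≤ 4 + 2*m - m*(4+3*m) * (x*(1-x)) := by
    intro x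
    nlinarith [mul_nonneg (mul_nonneg hm.le (by linarith : (0:ℝ) ≤ 4 + 3*m)) (sq_nonneg (x - 1/2)),
      mul_nonneg hm.le (by linarith : (0:ℝ) ≤ 4 - 3*m)]
  -- uIcc (1/2) l sits inside (0,1)
  have hsub : Set.uIcc (1/2 : ℝ) l ⊆ Set.Ioo (0:ℝ) 1 := by
    intro x hx
    rcases Set.mem_uIcc.mp hx with ⟨h1, h2⟩ | ⟨h1, h2⟩ <;>
      exact ⟨by linarith, by linarith⟩
  have hphi_pos : ∀ x ∈ Set.Ioo (0:ℝ) 1, 0 < phi0 m x := by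
    rintro x ⟨hx0, hx1⟩
    have := hden x
    have hu : 0 < x * (1 - x) := mul_pos hx0 (by linarith)
    unfold phi0
    have hc : 0 < m / (2 * (2 + m)) := div_pos hm (by linarith)
    exact mul_pos (mul_pos hc hu) (by linarith)
  -- split the integrand
  have heq : Set.EqOn (fun x => m / phi0 m x) (fun x => 1/(x*(1-x)) + g x)
      (Set.uIcc (1/2 : ℝ) l) := by
    intro x hx
    obtain ⟨hx0, hx1⟩ := hsub hx
    have hD := hden x
    have hx0' : x ≠ 0 := ne_of_gt hx0
    have hx1' : (1:ℝ) - x ≠ 0 := by linarith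
    have hD' : (4 + 2*m - m*(4+3*m) * (x*(1-x))) ≠ 0 := by linarith
    simp only [hg, phi0]
    rw [div_add_div _ _ (mul_ne_zero hx0' hx1') hD', div_eq_div_iff (by positivity) (mul_ne_zero (mul_ne_zero hx0' hx1') hD')]
    field_simp
    ring
  -- integrability
  have hgc : Continuous g := by
    apply Continuous.div continuous_const (by continuity)
    intro x
    have := hden x
    linarith
  have hgi : IntervalIntegrable g MeasureTheory.volume (1/2 : ℝ) l :=
    hgc.intervalIntegrable _ _
  have hfc : ContinuousOn (fun x : ℝ => 1/(x*(1-x))) (Set.uIcc (1/2 : ℝ) l) := by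
    apply ContinuousOn.div continuousOn_const (by fun_prop)
    intro x hx
    obtain ⟨hx0, hx1⟩ := hsub hx
    exact ne_of_gt (mul_pos hx0 (by linarith))
  have hfi : IntervalIntegrable (fun x : ℝ => 1/(x*(1-x))) MeasureTheory.volume (1/2 : ℝ) l :=
    hfc.intervalIntegrable
  -- the logarithmic part of the integral
  have hlog : ∫ x in (1/2 : ℝ)..l, 1/(x*(1-x)) = Real.log l - Real.log (1-l) := by
    have hFTC := intervalIntegral.integral_eq_sub_of_hasDerivAt
      (f := fun x : ℝ => Real.log x - Real.log (1-x))
      (f' := fun x : ℝ => 1/(x*(1-x))) (a := (1/2 : ℝ)) (b := l) ?_ hfi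
    · rw [hFTC]
      norm_num
    · intro x hx
      obtain ⟨hx0, hx1⟩ := hsub hx
      have hx1' : (0:ℝ) < 1 - x := by linarith
      have ha := Real.hasDerivAt_log (ne_of_gt hx0)
      have hin : HasDerivAt (fun y : ℝ => 1 - y) (-1) x := by
        have h := (hasDerivAt_const x (1:ℝ)).sub (hasDerivAt_id x)
        refine h.congr_deriv ?_
        norm_num
      have hb := (Real.hasDerivAt_log (ne_of_gt hx1')).comp x hin
      have hab := ha.sub hb
      refine hab.congr_deriv ?_
      field_simp
      ring
  -- the full integral
  set J : ℝ := ∫ x in (1/2 : ℝ)..l, g x with hJdef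
  have hint : (∫ x in (1/2 : ℝ)..l, m / phi0 m x) = (Real.log l - Real.log (1-l)) + J := by
    rw [intervalIntegral.integral_congr heq, intervalIntegral.integral_add hfi hgi, hlog]
  -- bound on J
  have hJ : |J| ≤ m := by
    have hb : ∀ x ∈ Set.uIoc (1/2 : ℝ) l, ‖g x‖ ≤ 7*m/4 := by
      intro x hx
      have hx' := hsub (Set.uIoc_subset_uIcc hx)
      have hD := hden x
      have hgx0 : 0 ≤ g x := div_nonneg (by nlinarith) (by linarith)
      rw [Real.norm_eq_abs, abs_of_nonneg hgx0]
      simp only [hg]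
      have h7 : m * (4 + 3*m) ≤ 7*m := by nlinarith
      calc m * (4 + 3*m) / (4 + 2*m - m*(4+3*m) * (x*(1-x))) ≤ m * (4+3*m) / 4 := by
            apply div_le_div_of_nonneg_left (by nlinarith) (by norm_num) (by linarith)
        _ ≤ 7*m/4 := by linarith
    have h := intervalIntegral.norm_integral_le_of_norm_le_const hb
    rw [Real.norm_eq_abs] at h
    have habs : |l - 1/2| ≤ 1/2 := by
      rw [abs_le]; constructor <;> linarith
    calc |J| ≤ 7*m/4 * |l - 1/2| := h
      _ ≤ 7*m/4 * (1/2) := by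
          apply mul_le_mul_of_nonneg_left habs (by linarith)
      _ ≤ m := by linarith
  set K : ℝ := Real.exp J with hKdef
  have hK1 : |K - 1| ≤ 2 * m := by
    calc |K - 1| ≤ 2 * |J| := Real.abs_exp_sub_one_le (le_trans hJ hm1)
      _ ≤ 2 * m := by linarith [hJ]
  -- rewrite the exponential
  have hexp : Real.exp (∫ x in (1/2 : ℝ)..l, m / phi0 m x) = l/(1-l) * K := by
    rw [hint, Real.exp_add, Real.exp_sub, Real.exp_log hl0, Real.exp_log h1l]
  -- key algebraic identities
  have hQ : l/(1-l) * ((p1 m l + m)^2 + phi0 m l * p2 m l)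
      = m^2 * q2 m l / (4*(2+m)^2) := by
    simp only [phi0, p1, p2, q2]
    field_simp
    ring
  have hR : p2 m l + 2*m * p1 m l / (1 + m*l) + m^2 / (1 + m*l) + 4*m/(2+m)
      - 2 * (m^2 * q2 m l / (4*(2+m)^2)) / (1 + m*l)
      = m^3 * s3 m l / (4*(2+m)^2*(1+m*l)) := by
    simp only [p1, p2, q2, s3]
    have h1ml' : (1:ℝ) + m*l ≠ 0 := by linarith
    field_simp
    ring
  -- assemble Fm0
  have hc2 : (2*m^2)/m^2 = (2:ℝ) := by
    rw [mul_div_assoc, div_self (pow_ne_zero 2 hm0)]; norm_num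
  set X : ℝ := 2 * (m^2 * q2 m l / (4*(2+m)^2)) / (1 + m*l) with hXdef
  have hFm : Fm0 m l = m^3 * s3 m l / (4*(2+m)^2*(1+m*l)) - (K - 1) * X := by
    rw [Fm0, deriv2_phi0, deriv_phi0, hexp, hc2]
    have key : 2 * (l/(1-l) * K) / (1 + m*l) * ((p1 m l + m)^2 + phi0 m l * p2 m l)
        = K * (2 * (l/(1-l) * ((p1 m l + m)^2 + phi0 m l * p2 m l)) / (1 + m*l)) := by
      ring
    rw [key, hQ]
    rw [show p2 m l + 2*m * p1 m l / (1 + m*l) + m^2/(1+m*l) + 4*m/(2+m)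
        - K * (2 * (m^2 * q2 m l / (4*(2+m)^2)) / (1 + m*l))
      = (p2 m l + 2*m * p1 m l / (1 + m*l) + m^2/(1+m*l) + 4*m/(2+m)
        - 2 * (m^2 * q2 m l / (4*(2+m)^2)) / (1 + m*l)) - (K - 1) * X from by rw [hXdef]; ring]
    rw [hR]
  -- final estimates
  have hs3 := s3_abs_le hm.le hm1 hl0.le hl1.le
  have hq2 := q2_abs_le hm.le hm1 hl0.le hl1.le
  have hm3 : (0:ℝ) < m^3 := by positivity
  have hterm1 : |m^3 * s3 m l / (4*(2+m)^2*(1+m*l))| ≤ 1293 * m^3 := by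
    have hden16 : (16:ℝ) ≤ 4*(2+m)^2*(1+m*l) := by nlinarith
    have hnum : |m^3 * s3 m l| ≤ m^3 * 20684 := by
      rw [abs_mul, abs_of_pos hm3]
      exact mul_le_mul_of_nonneg_left hs3 hm3.le
    calc |m^3 * s3 m l / (4*(2+m)^2*(1+m*l))| = |m^3 * s3 m l| / |4*(2+m)^2*(1+m*l)| :=
          abs_div _ _
      _ = |m^3 * s3 m l| / (4*(2+m)^2*(1+m*l)) := by
          rw [abs_of_pos (by linarith : (0:ℝ) < 4*(2+m)^2*(1+m*l))]
      _ ≤ m^3 * 20684 / 16 := by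
          apply div_le_div₀ (by positivity) hnum (by norm_num) hden16
      _ ≤ 1293 * m^3 := by nlinarith
  have hX : |X| ≤ 1214 * m^2 := by
    have hQv : |m^2 * q2 m l / (4*(2+m)^2)| ≤ m^2 * 9712 / 16 := by
      calc |m^2 * q2 m l / (4*(2+m)^2)| = |m^2 * q2 m l| / |4*(2+m)^2| := abs_div _ _
        _ = |m^2 * q2 m l| / (4*(2+m)^2) := by
            rw [abs_of_pos (by positivity : (0:ℝ) < 4*(2+m)^2)]
        _ ≤ m^2 * 9712 / 16 := by
            apply div_le_div₀ (by positivity) ?_ (by norm_num) (by nlinarith)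
            rw [abs_mul, abs_of_nonneg (by positivity : (0:ℝ) ≤ m^2)]
            exact mul_le_mul_of_nonneg_left hq2 (by positivity)
    have h1ml0 : (0:ℝ) < 1 + m*l := by linarith
    calc |X| = 2 * |m^2 * q2 m l / (4*(2+m)^2)| / |1 + m*l| := by
          rw [hXdef, abs_div, abs_mul, abs_two]
      _ = 2 * |m^2 * q2 m l / (4*(2+m)^2)| / (1 + m*l) := by rw [abs_of_pos h1ml0]
      _ ≤ 2 * (m^2 * 9712 / 16) / 1 := by
          apply div_le_div₀ (by positivity) (by linarith) (by norm_num) h1ml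
      _ ≤ 1214 * m^2 := by nlinarith
  have hterm2 : |(K - 1) * X| ≤ 2428 * m^3 := by
    rw [abs_mul]
    calc |K - 1| * |X| ≤ (2*m) * (1214 * m^2) :=
          mul_le_mul hK1 hX (abs_nonneg _) (by linarith)
      _ = 2428 * m^3 := by ring
  calc |Fm0 m l| = |m^3 * s3 m l / (4*(2+m)^2*(1+m*l)) - (K - 1) * X| := by rw [hFm]
    _ ≤ |m^3 * s3 m l / (4*(2+m)^2*(1+m*l))| + |(K - 1) * X| := abs_sub _ _
    _ ≤ 1293 * m^3 + 2428 * m^3 := add_le_add hterm1 hterm2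
    _ ≤ 4000 * m^3 := by nlinarith
end
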